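/- arXiv:1907.13011 — 7 statements merged into one kernel-verified Lean document; each statement's English description precedes it below -/
import Mathlib

section
/- Let T ⊆ ℝⁿ be a simplex (convex hull of n+1 affinely independent points), r ∈ (0,1), and x ∈ ℝⁿ. If (rT + x) ∩ T is nonempty then there exists y ∈ ℝⁿ such that (rT + x) ∩ T ⊆ rT + y ⊆ T. -/
open MeasureTheory Set
open scoped ENNReal Pointwise

/-- If `T` is a simplex, `r ∈ (0,1)`, and the homothetic copy `rT + x` meets `T`,
then there is `y` with `(rT + x) ∩ T ⊆ rT + y ⊆ T`. -/
theorem stmt1 {n : ℕ} (x : Fin (n + 1) → EuclideanSpace ℝ (Fin n))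
    (hx : AffineIndependent ℝ x)
    (T : Set (EuclideanSpace ℝ (Fin n))) (hT : T = convexHull ℝ (Set.range x))
    (r : ℝ) (hr : r ∈ Set.Ioo (0:ℝ) 1) (c : EuclideanSpace ℝ (Fin n))
    (hne : ((r • T + {c}) ∩ T).Nonempty) :
    ∃ y : EuclideanSpace ℝ (Fin n),
      (r • T + {c}) ∩ T ⊆ r • T + {y} ∧ r • T + {y} ⊆ T := by
  obtain ⟨hr0, hr1⟩ := hr
  -- build the affine basis
  have hcard : Fintype.card (Fin (n+1)) = Module.finrank ℝ (EuclideanSpace ℝ (Fin n)) + 1 := by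
    simp [finrank_euclideanSpace_fin]
  have hspan : affineSpan ℝ (Set.range x) = ⊤ :=
    hx.affineSpan_eq_top_iff_card_eq_finrank_add_one.mpr hcard
  let B : AffineBasis (Fin (n+1)) ℝ (EuclideanSpace ℝ (Fin n)) := ⟨x, hx, hspan⟩
  have hBx : (B : Fin (n+1) → EuclideanSpace ℝ (Fin n)) = x := rfl
  have hTc : T = { w | ∀ i, 0 ≤ B.coord i w } := by
    rw [hT, ← hBx, B.convexHull_eq_nonneg_coord]
  set k : Fin (n+1) → ℝ := fun i => B.coord i 0 with hkdef
  have hksum : ∑ i, k i = 1 := B.sum_coord_apply_eq_one 0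
  -- characterize membership in r•T + {b}
  have hmem : ∀ (b w : EuclideanSpace ℝ (Fin n)),
      w ∈ r • T + {b} ↔ ∀ i, B.coord i b - r * k i ≤ B.coord i w := by
    intro b w
    have h1 : w ∈ r • T + {b} ↔ r⁻¹ • (w - b) ∈ T := by
      rw [Set.add_singleton]
      constructor
      · rintro ⟨u, hu, rfl⟩
        rw [mem_smul_set_iff_inv_smul_mem₀ (ne_of_gt hr0)] at hu
        simpa using hu
      · intro h
        refine ⟨w - b, ?_, sub_add_cancel w b⟩
        rw [mem_smul_set_iff_inv_smul_mem₀ (ne_of_gt hr0)]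
        exact h
    rw [h1, hTc]
    have hco : ∀ (i) (z : EuclideanSpace ℝ (Fin n)),
        B.coord i z = (B.coord i).linear z + k i := by
      intro i z
      conv_lhs => rw [AffineMap.decomp (B.coord i)]
      rfl
    simp only [Set.mem_setOf_eq]
    refine forall_congr' fun i => ?_
    rw [hco i (r⁻¹ • (w - b)), hco i b, hco i w]
    rw [LinearMap.map_smul ((B.coord i).linear), LinearMap.map_sub]
    set Lw := (B.coord i).linear w
    set Lb := (B.coord i).linear b
    simp only [smul_eq_mul]
    constructor
    · intro h
      have h2 := mul_le_mul_of_nonneg_left h hr0.le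
      rw [mul_zero] at h2
      have h3 : r * (r⁻¹ * (Lw - Lb) + k i) = (Lw - Lb) + r * k i := by
        field_simp
      rw [h3] at h2
      linarith
    · intro h
      have : 0 ≤ (Lw - Lb) + r * k i := by linarith
      have := mul_le_mul_of_nonneg_left this (le_of_lt (inv_pos.mpr hr0))
      rw [mul_zero] at this
      calc (0:ℝ) ≤ r⁻¹ * ((Lw - Lb) + r * k i) := this
        _ = r⁻¹ * (Lw - Lb) + k i := by field_simp
  -- the lower bounds from the intersection
  set m : Fin (n+1) → ℝ := fun i => max 0 (B.coord i c - r * k i) with hmdef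
  have hm0 : ∀ i, 0 ≤ m i := fun i => le_max_left _ _
  set s : ℝ := ∑ i, m i with hsdef
  have hs1r : 1 - r ≤ s := by
    have : ∑ i, (B.coord i c - r * k i) ≤ s :=
      Finset.sum_le_sum fun i _ => le_max_right _ _
    have hsum : ∑ i, (B.coord i c - r * k i) = 1 - r := by
      rw [Finset.sum_sub_distrib, B.sum_coord_apply_eq_one, ← Finset.mul_sum, hksum, mul_one]
    linarith
  have hspos : 0 < s := lt_of_lt_of_le (by linarith) hs1r
  set t : Fin (n+1) → ℝ := fun i => ((1 - r) / s) * m i with htdef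
  have ht0 : ∀ i, 0 ≤ t i := fun i =>
    mul_nonneg (div_nonneg (by linarith) hspos.le) (hm0 i)
  have htm : ∀ i, t i ≤ m i := by
    intro i
    have h1 : (1 - r) / s ≤ 1 := (div_le_one hspos).mpr hs1r
    calc t i = ((1 - r) / s) * m i := rfl
      _ ≤ 1 * m i := mul_le_mul_of_nonneg_right h1 (hm0 i)
      _ = m i := one_mul _
  set W : Fin (n+1) → ℝ := fun i => t i + r * k i with hWdef
  have hWsum : ∑ i, W i = 1 := by
    have : ∑ i, t i = 1 - r := by
      simp only [htdef, ← Finset.mul_sum, ← hsdef]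
      field_simp
    simp only [hWdef, Finset.sum_add_distrib, this, ← Finset.mul_sum, hksum]
    ring
  set y : EuclideanSpace ℝ (Fin n) := Finset.univ.affineCombination ℝ x W with hydef
  have hyc : ∀ i, B.coord i y = W i := by
    intro i
    rw [hydef, ← hBx]
    exact B.coord_apply_combination_of_mem (Finset.mem_univ i) hWsum
  refine ⟨y, ?_, ?_⟩
  · intro w hw
    obtain ⟨hw1, hw2⟩ := hw
    rw [hmem c w] at hw1
    rw [hTc] at hw2
    rw [hmem y w]
    intro i
    have : m i ≤ B.coord i w := max_le (hw2 i) (hw1 i)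
    have h2 : B.coord i y - r * k i = t i := by rw [hyc i]; simp [hWdef]
    rw [h2]
    exact le_trans (htm i) this
  · intro w hw
    rw [hmem y w] at hw
    rw [hTc]
    intro i
    have h2 : B.coord i y - r * k i = t i := by rw [hyc i]; simp [hWdef]
    have := hw i
    rw [h2] at this
    exact le_trans (ht0 i) this
end

section
/- The intersection of a simplex T ⊆ ℝⁿ with any translate of a positive scalar multiple of T is either empty or itself a translate of a (possibly smaller) positive scalar multiple of T. -/
open MeasureTheory Set
open scoped ENNReal Pointwise

/-- The intersection of a simplex `T` with a translate `rT + x` of a positive scalar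
multiple of `T` (with `r ∈ (0,1]`), if nonempty, equals `sT + y` for some
`s ∈ [0, r]` and `y` (the case `s = 0` being a degenerate point). -/
theorem stmt2 {n : ℕ} (x₀ : Fin (n + 1) → EuclideanSpace ℝ (Fin n))
    (hx₀ : AffineIndependent ℝ x₀)
    (T : Set (EuclideanSpace ℝ (Fin n))) (hT : T = convexHull ℝ (Set.range x₀))
    (r : ℝ) (hr : r ∈ Set.Ioc (0:ℝ) 1) (c : EuclideanSpace ℝ (Fin n))
    (hne : ((r • T + {c}) ∩ T).Nonempty) :
    ∃ s : ℝ, ∃ y : EuclideanSpace ℝ (Fin n), 0 ≤ s ∧ s ≤ r ∧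
      (r • T + {c}) ∩ T = s • T + {y} := by
  obtain ⟨hr0, hr1⟩ := hr
  have htop : affineSpan ℝ (Set.range x₀) = ⊤ := by
    rw [hx₀.affineSpan_eq_top_iff_card_eq_finrank_add_one]
    simp
  let b : AffineBasis (Fin (n + 1)) ℝ (EuclideanSpace ℝ (Fin n)) := ⟨x₀, hx₀, htop⟩
  have hbx : (b : Fin (n+1) → EuclideanSpace ℝ (Fin n)) = x₀ := rfl
  have hTb : T = {z | ∀ i, 0 ≤ b.coord i z} := by
    rw [hT, ← b.convexHull_eq_nonneg_coord, hbx]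
  have hTne : T.Nonempty := ⟨x₀ 0, by rw [hT]; exact subset_convexHull ℝ _ ⟨0, rfl⟩⟩
  -- affine formula for coordinates
  have hcoord : ∀ (s : ℝ) (v z : EuclideanSpace ℝ (Fin n)) (i),
      b.coord i (s • z + v) = s * (b.coord i z - b.coord i 0) + b.coord i v := by
    intro s v z i
    have h1 : ∀ w p : EuclideanSpace ℝ (Fin n),
        b.coord i (w + p) = (b.coord i).linear w + b.coord i p := fun w p =>
      (b.coord i).map_vadd p w
    have h2 : (b.coord i).linear z = b.coord i z - b.coord i 0 := by
      have := h1 z 0; rw [add_zero] at this; linarith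
    rw [h1 (s • z) v, LinearMap.map_smul, smul_eq_mul, h2]
  -- membership in a homothet
  have memHom : ∀ (s : ℝ), 0 < s → ∀ (v z : EuclideanSpace ℝ (Fin n)),
      (z ∈ s • T + {v} ↔ ∀ i, b.coord i v - s * b.coord i 0 ≤ b.coord i z) := by
    intro s hs v z
    rw [Set.mem_add]
    constructor
    · rintro ⟨u, hu, v', hv', rfl⟩ i
      rw [Set.mem_singleton_iff] at hv'
      subst hv'
      obtain ⟨t, ht, rfl⟩ := Set.mem_smul_set.mp hu
      rw [hTb] at ht
      rw [hcoord]
      have := ht i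
      nlinarith
    · intro h
      refine ⟨s • (s⁻¹ • (z - v)), Set.mem_smul_set.mpr ⟨s⁻¹ • (z - v), ?_, rfl⟩,
        v, rfl, ?_⟩
      · rw [hTb]
        intro i
        have hz : s • (s⁻¹ • (z - v)) + v = z := by
          rw [smul_smul, mul_inv_cancel₀ hs.ne', one_smul]; abel
        have hc := hcoord s v (s⁻¹ • (z - v)) i
        rw [hz] at hc
        have := h i
        nlinarith
      · rw [smul_smul, mul_inv_cancel₀ hs.ne', one_smul]; abel
  set β : Fin (n+1) → ℝ := fun i => b.coord i c - r * b.coord i 0 with hβ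
  set γ : Fin (n+1) → ℝ := fun i => max (β i) 0 with hγ
  set s : ℝ := 1 - ∑ i, γ i with hsdef
  have hsumβ : ∑ i, β i = 1 - r := by
    simp only [hβ, Finset.sum_sub_distrib, ← Finset.mul_sum,
      b.sum_coord_apply_eq_one, mul_one]
  have hLHS : (r • T + {c}) ∩ T = {z | ∀ i, γ i ≤ b.coord i z} := by
    ext z
    rw [Set.mem_inter_iff, memHom r hr0 c z]
    rw [hTb]
    simp only [Set.mem_setOf_eq]
    constructor
    · rintro ⟨h1, h2⟩ i; exact max_le (h1 i) (h2 i)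
    · intro h; exact ⟨fun i => le_trans (le_max_left (β i) 0) (h i),
        fun i => le_trans (le_max_right (β i) 0) (h i)⟩
  obtain ⟨z₀, hz₀⟩ := hne
  rw [hLHS] at hz₀
  have hs0 : 0 ≤ s := by
    have h1 : ∑ i, γ i ≤ ∑ i, b.coord i z₀ := Finset.sum_le_sum fun i _ => hz₀ i
    rw [b.sum_coord_apply_eq_one z₀] at h1
    simp only [hsdef]; linarith
  have hsr : s ≤ r := by
    have h1 : ∑ i, β i ≤ ∑ i, γ i := Finset.sum_le_sum fun i _ => le_max_left _ _
    rw [hsumβ] at h1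
    simp only [hsdef]; linarith
  -- define y
  set w : Fin (n+1) → ℝ := fun i => γ i + s * b.coord i 0 with hw
  have hwsum : ∑ i, w i = 1 := by
    simp only [hw, Finset.sum_add_distrib, ← Finset.mul_sum,
      b.sum_coord_apply_eq_one, mul_one, hsdef]; ring
  set y : EuclideanSpace ℝ (Fin n) := Finset.univ.affineCombination ℝ x₀ w with hy
  have hcy : ∀ i, b.coord i y = w i := fun i => by
    rw [hy, ← hbx]; exact b.coord_apply_combination_of_mem (Finset.mem_univ i) hwsum
  refine ⟨s, y, hs0, hsr, ?_⟩
  rcases eq_or_lt_of_le hs0 with hseq | hspos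
  · -- s = 0 : intersection is the single point y
    have hsγ : ∑ i, γ i = 1 := by simp only [hsdef] at hseq; linarith
    have hRHS : s • T + {y} = {y} := by
      rw [← hseq, zero_smul_set hTne]
      ext z
      simp [Set.mem_add]
    rw [hLHS, hRHS]
    ext z
    simp only [Set.mem_setOf_eq, Set.mem_singleton_iff]
    constructor
    · intro h
      refine b.ext_elem fun i => ?_
      have hall : ∀ i ∈ Finset.univ, b.coord i z - γ i = 0 := by
        rw [← Finset.sum_eq_zero_iff_of_nonneg]
        · rw [Finset.sum_sub_distrib, b.sum_coord_apply_eq_one z, hsγ]; ring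
        · intro i _; have := h i; linarith
      have h0 := hall i (Finset.mem_univ i)
      rw [hcy i]; simp only [hw, ← hseq]; linarith
    · rintro rfl i
      rw [hcy i]; simp only [hw, ← hseq]; linarith [le_refl (γ i)]
  · -- s > 0
    rw [hLHS]
    ext z
    rw [memHom s hspos y z]
    simp only [Set.mem_setOf_eq]
    constructor
    · intro h i
      have h1 := h i
      rw [hcy i]; simp only [hw]; linarith
    · intro h i
      have h1 := h i
      rw [hcy i] at h1; simp only [hw] at h1; linarith
end

section
/- Fractal homogeneity lemma: let T ⊆ ℝⁿ be a simplex of volume 1 with vertices x₀,…,xₙ, let A ⊆ T be measurable containing all vertices of T with |A| = 1 − δ, let t ∈ (0, 1/2], λ = 1 − t, and δ(A;t) = |(tA + (1−t)A) \ A|. Define families 𝒯_{i,k} of translates of λⁱT by: 𝒯_{i,0} = {(1−λⁱ)xⱼ + λⁱT : 0 ≤ j ≤ n} and 𝒯_{i,k+1} = {λB₁ + (1−λ)B₂ : B₁, B₂ ∈ 𝒯_{i,k}}. Then for every T' ∈ 𝒯_{i,k}, writing (λⁱA)_{T'} for the translate of λⁱA under the translation carrying λⁱT to T', one has |(λⁱA)_{T'}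 \ A| ≤ (i + 2k)·δ(A;t). -/
open MeasureTheory Set
open scoped ENNReal NNReal Pointwise

/-- The family `𝒯_{i,k}` obtained from an initial family `T0` of sets by `k` rounds
of Minkowski `λ`-weighted averaging. -/
def avgFamily {n : ℕ} (lam : ℝ) (T0 : Set (Set (EuclideanSpace ℝ (Fin n)))) :
    ℕ → Set (Set (EuclideanSpace ℝ (Fin n)))
  | 0 => T0
  | (k + 1) => {B | ∃ B1 ∈ avgFamily lam T0 k, ∃ B2 ∈ avgFamily lam T0 k,
      B = lam • B1 + (1 - lam) • B2}

lemma oneDim_compact_add {K L : Set ℝ} (hK : IsCompact K) (hL : IsCompact L)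
    (hKne : K.Nonempty) (hLne : L.Nonempty) :
    volume K + volume L ≤ volume (K + L) := by
  set a := sSup K with ha
  set b := sInf L with hb
  have haK : a ∈ K := hK.sSup_mem hKne
  have hbL : b ∈ L := hL.sInf_mem hLne
  set P : Set ℝ := b +ᵥ K with hP
  set Q : Set ℝ := a +ᵥ L with hQ
  have hPsub : P ⊆ K + L := by
    rintro p ⟨k, hk, rfl⟩
    exact ⟨k, hk, b, hbL, add_comm k b⟩
  have hQsub : Q ⊆ K + L := by
    rintro q ⟨l, hl, rfl⟩
    exact ⟨a, haK, l, hl, rfl⟩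
  have hPQ : P ∩ Q ⊆ {a + b} := by
    rintro p ⟨⟨k, hk, rfl⟩, ⟨l, hl, hlq⟩⟩
    have h1 : b + k ≤ a + b := by
      have := le_csSup hK.bddAbove hk
      linarith
    have h2 : a + b ≤ b + k := by
      have h3 := csInf_le hL.bddBelow hl
      have : a + l = b + k := hlq
      linarith
    simp [le_antisymm h1 h2, add_comm b k]
  have hQm : MeasurableSet Q := by
    have : IsCompact Q := by
      rw [hQ, ← Set.image_vadd]
      exact hL.image (continuous_const_vadd a)
    exact this.isClosed.measurableSet
  calc volume K + volume L = volume P + volume Q := by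
        rw [hP, hQ, measure_vadd (μ := volume), measure_vadd (μ := volume)]
    _ = volume (P ∪ Q) + volume (P ∩ Q) := (measure_union_add_inter P hQm).symm
    _ ≤ volume (K + L) + volume ({a + b} : Set ℝ) :=
        add_le_add (measure_mono (union_subset hPsub hQsub)) (measure_mono hPQ)
    _ = volume (K + L) := by simp

lemma oneDim_add {U V : Set ℝ} (hU : U.Nonempty) (hV : V.Nonempty)
    (mU : MeasurableSet U) (mV : MeasurableSet V) :
    volume U + volume V ≤ volume (U + V) := by
  obtain ⟨u₀, hu₀⟩ := hU
  obtain ⟨v₀, hv₀⟩ := hV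
  have htransU : volume U ≤ volume (U + V) := by
    calc volume U = volume (v₀ +ᵥ U) := (measure_vadd (μ := volume) _ _).symm
      _ ≤ volume (U + V) := by
          apply measure_mono
          rintro p ⟨u, hu, rfl⟩
          exact ⟨u, hu, v₀, hv₀, add_comm u v₀⟩
  have htransV : volume V ≤ volume (U + V) := by
    calc volume V = volume (u₀ +ᵥ V) := (measure_vadd (μ := volume) _ _).symm
      _ ≤ volume (U + V) := by
          apply measure_mono
          rintro p ⟨v, hv, rfl⟩
          exact ⟨u₀, hu₀, v, hv, rfl⟩
  rcases eq_or_ne (volume U) ⊤ with hUt | hUt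
  · have : volume (U + V) = ⊤ := eq_top_iff.2 (hUt ▸ htransU)
    simp [this]
  rcases eq_or_ne (volume V) ⊤ with hVt | hVt
  · have : volume (U + V) = ⊤ := eq_top_iff.2 (hVt ▸ htransV)
    simp [this]
  apply ENNReal.le_of_forall_pos_le_add
  intro ε hε _
  have hε2 : ((ε : ℝ≥0∞) / 2) ≠ 0 := by
    simp [ENNReal.div_eq_zero_iff, hε.ne']
  obtain ⟨KU, hKUsub, hKUc, hKUv⟩ := mU.exists_isCompact_lt_add hUt hε2
  obtain ⟨KV, hKVsub, hKVc, hKVv⟩ := mV.exists_isCompact_lt_add hVt hε2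
  have hKU' : IsCompact (insert u₀ KU) := hKUc.insert u₀
  have hKV' : IsCompact (insert v₀ KV) := hKVc.insert v₀
  have hsub : insert u₀ KU + insert v₀ KV ⊆ U + V :=
    Set.add_subset_add (insert_subset hu₀ hKUsub) (insert_subset hv₀ hKVsub)
  have hbm := oneDim_compact_add hKU' hKV' (insert_nonempty _ _) (insert_nonempty _ _)
  calc volume U + volume V
      ≤ (volume KU + ε/2) + (volume KV + ε/2) := by
        exact add_le_add hKUv.le hKVv.le
    _ = (volume KU + volume KV) + (ε/2 + ε/2) := by ring
    _ ≤ volume (insert u₀ KU + insert v₀ KV) + ε := by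
        rw [ENNReal.add_halves]
        gcongr
        calc volume KU + volume KV
            ≤ volume (insert u₀ KU) + volume (insert v₀ KV) :=
              add_le_add (measure_mono (subset_insert _ _)) (measure_mono (subset_insert _ _))
          _ ≤ _ := hbm
    _ ≤ volume (U + V) + ε := add_le_add (measure_mono hsub) le_rfl

lemma layercake' {f : ℝ → ℝ≥0∞} (hf : Measurable f) {B : ℝ≥0∞} (hB : B ≠ ⊤)
    (hfB : ∀ s, f s ≤ B) :
    ∫⁻ s, f s = ∫⁻ c in Ioi (0:ℝ), volume {s | ENNReal.ofReal c < f s} := by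
  have hne : ∀ s, f s ≠ ⊤ := fun s => ne_top_of_le_ne_top hB (hfB s)
  have h1 : ∫⁻ s, f s = ∫⁻ s, ENNReal.ofReal ((f s).toReal) := by
    apply lintegral_congr
    intro s
    rw [ENNReal.ofReal_toReal (hne s)]
  rw [h1, lintegral_eq_lintegral_meas_lt volume
    (ae_of_all _ fun s => ENNReal.toReal_nonneg) hf.ennreal_toReal.aemeasurable]
  apply setLIntegral_congr_fun measurableSet_Ioi
  intro c hc
  beta_reduce
  congr 1
  ext s
  simp only [mem_setOf_eq]
  rw [ENNReal.ofReal_lt_iff_lt_toReal (le_of_lt hc) (hne s)]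

lemma ennreal_amgm {x y : ℝ≥0∞} (hx : x ≠ ⊤) (hy : y ≠ ⊤) {l t : ℝ}
    (hl : 0 ≤ l) (ht : 0 ≤ t) (hlt : l + t = 1) :
    x ^ l * y ^ t ≤ ENNReal.ofReal l * x + ENNReal.ofReal t * y := by
  lift x to ℝ≥0 using hx
  lift y to ℝ≥0 using hy
  have hw : l.toNNReal + t.toNNReal = 1 := by
    rw [← Real.toNNReal_add hl ht, hlt, Real.toNNReal_one]
  have key := NNReal.geom_mean_le_arith_mean2_weighted l.toNNReal t.toNNReal x y hw
  have hcl : ((l.toNNReal : ℝ)) = l := Real.coe_toNNReal l hl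
  have hct : ((t.toNNReal : ℝ)) = t := Real.coe_toNNReal t ht
  calc x ^ l * y ^ t = ((x ^ l * y ^ t : ℝ≥0) : ℝ≥0∞) := by
        rw [ENNReal.coe_mul, ENNReal.coe_rpow_of_nonneg x hl, ENNReal.coe_rpow_of_nonneg y ht]
    _ ≤ ((l.toNNReal * x + t.toNNReal * y : ℝ≥0) : ℝ≥0∞) := by
        rw [ENNReal.coe_le_coe, ← hcl, ← hct]
        convert key using 3 <;> simp [hl, ht, sup_of_le_left]
    _ = ENNReal.ofReal l * x + ENNReal.ofReal t * y := by
        rw [ENNReal.coe_add, ENNReal.coe_mul, ENNReal.coe_mul]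
        rfl

lemma meas_superlevel_measurable {φ : ℝ → ℝ≥0∞} (hφ : Measurable φ) :
    Measurable fun c : ℝ => volume {s | ENNReal.ofReal c < φ s} := by
  apply Antitone.measurable
  intro c₁ c₂ h
  apply measure_mono
  intro s hs
  exact lt_of_le_of_lt (ENNReal.ofReal_le_ofReal h) hs

lemma vol_smul_line {U : Set ℝ} {l : ℝ} (hl : 0 < l) :
    volume (l • U) = ENNReal.ofReal l * volume U := by
  rw [Measure.addHaar_smul volume l U]
  congr
  rw [Module.finrank_self, pow_one, abs_of_pos hl]

lemma one_dim_PL {f g h : ℝ → ℝ≥0∞} (hf : Measurable f) (hg : Measurable g) (hh : Measurable h)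
    {F G H : ℝ≥0∞} (hFt : F ≠ ⊤) (hGt : G ≠ ⊤) (hHt : H ≠ ⊤)
    (hfF : ∀ s, f s ≤ F) (hgG : ∀ r, g r ≤ G) (hhH : ∀ u, h u ≤ H)
    (hFsup : ∀ c, c < F → ∃ s, c < f s) (hGsup : ∀ c, c < G → ∃ r, c < g r)
    (hfi : ∫⁻ s, f s ≠ ⊤) (hgi : ∫⁻ r, g r ≠ ⊤)
    {l t : ℝ} (hl : 0 < l) (ht : 0 < t) (hlt : l + t = 1)
    (key : ∀ s r, 0 < f s → 0 < g r → f s ^ l * g r ^ t ≤ h (l*s + t*r)) :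
    (∫⁻ s, f s) ^ l * (∫⁻ r, g r) ^ t ≤ ∫⁻ u, h u := by
  rcases eq_or_ne F 0 with hF0 | hF0
  · have hz : ∫⁻ s, f s = 0 := by
      have : ∀ s, f s = 0 := fun s => le_antisymm (hF0 ▸ hfF s) zero_le
      simp [this]
    rw [hz, ENNReal.zero_rpow_of_pos hl, zero_mul]
    exact zero_le
  rcases eq_or_ne G 0 with hG0 | hG0
  · have hz : ∫⁻ r, g r = 0 := by
      have : ∀ r, g r = 0 := fun r => le_antisymm (hG0 ▸ hgG r) zero_le
      simp [this]
    rw [hz, ENNReal.zero_rpow_of_pos ht, mul_zero]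
    exact zero_le
  set Z := F ^ l * G ^ t with hZdef
  have hFl0 : F ^ l ≠ 0 := (ENNReal.rpow_pos (pos_iff_ne_zero.2 hF0) hFt).ne'
  have hGt0 : G ^ t ≠ 0 := (ENNReal.rpow_pos (pos_iff_ne_zero.2 hG0) hGt).ne'
  have hFlt : F ^ l ≠ ⊤ := ENNReal.rpow_ne_top_of_nonneg hl.le hFt
  have hGtt : G ^ t ≠ ⊤ := ENNReal.rpow_ne_top_of_nonneg ht.le hGt
  have hZ0 : Z ≠ 0 := mul_ne_zero hFl0 hGt0
  have hZt : Z ≠ ⊤ := ENNReal.mul_ne_top hFlt hGtt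
  set ftil := fun s => Z / F * f s with hftil
  set gtil := fun r => Z / G * g r with hgtil
  have hZF0 : Z / F ≠ 0 := by simp [ENNReal.div_eq_zero_iff, hZ0, hFt]
  have hZFt : Z / F ≠ ⊤ := (ENNReal.div_lt_top hZt hF0).ne
  have hZG0 : Z / G ≠ 0 := by simp [ENNReal.div_eq_zero_iff, hZ0, hGt]
  have hZGt : Z / G ≠ ⊤ := (ENNReal.div_lt_top hZt hG0).ne
  have hftilm : Measurable ftil := hf.const_mul _
  have hgtilm : Measurable gtil := hg.const_mul _
  have hZFF : Z / F * F = Z := ENNReal.div_mul_cancel hF0 hFt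
  have hZGG : Z / G * G = Z := ENNReal.div_mul_cancel hG0 hGt
  have hftilZ : ∀ s, ftil s ≤ Z := fun s => by
    calc Z / F * f s ≤ Z / F * F := by gcongr; exact hfF s
      _ = Z := hZFF
  have hgtilZ : ∀ r, gtil r ≤ Z := fun r => by
    calc Z / G * g r ≤ Z / G * G := by gcongr; exact hgG r
      _ = Z := hZGG
  -- superlevel inequality
  have hsuper : ∀ c : ℝ, c ∈ Ioi (0:ℝ) →
      ENNReal.ofReal l * volume {s | ENNReal.ofReal c < ftil s}
        + ENNReal.ofReal t * volume {r | ENNReal.ofReal c < gtil r}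
      ≤ volume {u | ENNReal.ofReal c < h u} := by
    intro c hc
    rcases le_or_gt Z (ENNReal.ofReal c) with hcZ | hcZ
    · have hUe : {s | ENNReal.ofReal c < ftil s} = ∅ :=
        eq_empty_of_forall_notMem fun s hs =>
          absurd (lt_of_lt_of_le hs ((hftilZ s).trans hcZ)) (lt_irrefl _)
      have hVe : {r | ENNReal.ofReal c < gtil r} = ∅ :=
        eq_empty_of_forall_notMem fun r hr =>
          absurd (lt_of_lt_of_le hr ((hgtilZ r).trans hcZ)) (lt_irrefl _)
      simp [hUe, hVe]
    · set U := {s | ENNReal.ofReal c < ftil s} with hU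
      set V := {r | ENNReal.ofReal c < gtil r} with hV
      have hUm : MeasurableSet U := measurableSet_lt measurable_const hftilm
      have hVm : MeasurableSet V := measurableSet_lt measurable_const hgtilm
      have hc0 : ENNReal.ofReal c ≠ 0 := (ENNReal.ofReal_pos.2 hc).ne'
      have hct : ENNReal.ofReal c ≠ ⊤ := ENNReal.ofReal_ne_top
      set ρ := ENNReal.ofReal c / Z with hρ
      have hρZ : ρ * Z = ENNReal.ofReal c := ENNReal.div_mul_cancel hZ0 hZt
      have hρ0 : ρ ≠ 0 := by simp [hρ, ENNReal.div_eq_zero_iff, hc0, hZt]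
      have hρt : ρ ≠ ⊤ := (ENNReal.div_lt_top hct hZ0).ne
      have hρ1 : ρ < 1 := by
        rw [hρ, ENNReal.div_lt_iff (Or.inl hZ0) (Or.inl hZt), one_mul]
        exact hcZ
      set p := ρ * F with hp
      have hpF : p < F := by
        calc ρ * F < 1 * F := by
              exact ENNReal.mul_lt_mul_iff_left hF0 hFt |>.2 hρ1
          _ = F := one_mul F
      set q := ρ * G with hq
      have hqG : q < G := by
        calc ρ * G < 1 * G := ENNReal.mul_lt_mul_iff_left hG0 hGt |>.2 hρ1
          _ = G := one_mul G
      have hp0 : p ≠ 0 := mul_ne_zero hρ0 hF0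
      have hq0 : q ≠ 0 := mul_ne_zero hρ0 hG0
      -- membership facts
      have hmemU : ∀ u ∈ U, p < f u := by
        intro u hu
        by_contra hcon
        push_neg at hcon
        have : ftil u ≤ ENNReal.ofReal c := by
          calc Z / F * f u ≤ Z / F * (ρ * F) := by gcongr
            _ = ρ * (Z / F * F) := by ring
            _ = ENNReal.ofReal c := by rw [hZFF, hρZ]
        exact absurd (lt_of_lt_of_le hu this) (lt_irrefl _)
      have hmemV : ∀ v ∈ V, q < g v := by
        intro v hv
        by_contra hcon
        push_neg at hcon
        have : gtil v ≤ ENNReal.ofReal c := by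
          calc Z / G * g v ≤ Z / G * (ρ * G) := by gcongr
            _ = ρ * (Z / G * G) := by ring
            _ = ENNReal.ofReal c := by rw [hZGG, hρZ]
        exact absurd (lt_of_lt_of_le hv this) (lt_irrefl _)
      -- nonemptiness
      have hUne : U.Nonempty := by
        obtain ⟨s, hs⟩ := hFsup p hpF
        refine ⟨s, ?_⟩
        show ENNReal.ofReal c < Z / F * f s
        calc ENNReal.ofReal c = ρ * (Z / F * F) := by rw [hZFF, hρZ]
          _ = Z / F * p := by rw [hp]; ring
          _ < Z / F * f s := (ENNReal.mul_lt_mul_iff_right hZF0 hZFt).2 hs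
      have hVne : V.Nonempty := by
        obtain ⟨r, hr⟩ := hGsup q hqG
        refine ⟨r, ?_⟩
        show ENNReal.ofReal c < Z / G * g r
        calc ENNReal.ofReal c = ρ * (Z / G * G) := by rw [hZGG, hρZ]
          _ = Z / G * q := by rw [hq]; ring
          _ < Z / G * g r := (ENNReal.mul_lt_mul_iff_right hZG0 hZGt).2 hr
      -- p^l * q^t = ofReal c
      have hpq : p ^ l * q ^ t = ENNReal.ofReal c := by
        rw [hp, hq, ENNReal.mul_rpow_of_nonneg _ _ hl.le, ENNReal.mul_rpow_of_nonneg _ _ ht.le]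
        calc ρ ^ l * F ^ l * (ρ ^ t * G ^ t) = ρ ^ l * ρ ^ t * (F ^ l * G ^ t) := by ring
          _ = ρ ^ (l + t) * Z := by rw [ENNReal.rpow_add l t hρ0 hρt]
          _ = ρ * Z := by rw [hlt, ENNReal.rpow_one]
          _ = ENNReal.ofReal c := hρZ
      -- containment
      have hcont : l • U + t • V ⊆ {u | ENNReal.ofReal c < h u} := by
        rintro z ⟨zu, ⟨u, hu, rfl⟩, zv, ⟨v, hv, rfl⟩, rfl⟩
        have hfu : p < f u := hmemU u hu
        have hgv : q < g v := hmemV v hv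
        have hfu0 : 0 < f u := lt_of_le_of_lt (zero_le (a := p)) hfu
        have hgv0 : 0 < g v := lt_of_le_of_lt (zero_le (a := q)) hgv
        show ENNReal.ofReal c < h (l • u + t • v)
        have : (l • u : ℝ) + t • v = l * u + t * v := rfl
        rw [this]
        calc ENNReal.ofReal c = p ^ l * q ^ t := hpq.symm
          _ < f u ^ l * g v ^ t :=
              ENNReal.mul_lt_mul (ENNReal.rpow_lt_rpow hfu hl) (ENNReal.rpow_lt_rpow hgv ht)
          _ ≤ h (l * u + t * v) := key u v hfu0 hgv0
      calc ENNReal.ofReal l * volume U + ENNReal.ofReal t * volume V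
          = volume (l • U) + volume (t • V) := by
            rw [vol_smul_line hl, vol_smul_line ht]
        _ ≤ volume (l • U + t • V) :=
            oneDim_add (hUne.smul_set) (hVne.smul_set) (hUm.const_smul₀ l) (hVm.const_smul₀ t)
        _ ≤ volume {u | ENNReal.ofReal c < h u} := measure_mono hcont
  -- integrate
  have hfmeas' : Measurable fun c : ℝ => volume {s | ENNReal.ofReal c < ftil s} :=
    meas_superlevel_measurable hftilm
  have hgmeas' : Measurable fun c : ℝ => volume {r | ENNReal.ofReal c < gtil r} :=
    meas_superlevel_measurable hgtilm
  have hint : ENNReal.ofReal l * (∫⁻ s, ftil s) + ENNReal.ofReal t * (∫⁻ r, gtil r) ≤ ∫⁻ u, h u := by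
    rw [layercake' hh hHt hhH, layercake' hftilm hZt hftilZ, layercake' hgtilm hZt hgtilZ,
      ← lintegral_const_mul _ hfmeas', ← lintegral_const_mul _ hgmeas',
      ← lintegral_add_left (hfmeas'.const_mul _)]
    exact setLIntegral_mono' measurableSet_Ioi hsuper
  have hiftil : ∫⁻ s, ftil s = Z / F * ∫⁻ s, f s := lintegral_const_mul _ hf
  have higtil : ∫⁻ r, gtil r = Z / G * ∫⁻ r, g r := lintegral_const_mul _ hg
  set If := ∫⁻ s, f s with hIf
  set Ig := ∫⁻ r, g r with hIg
  have hxt : If / F ≠ ⊤ := (ENNReal.div_lt_top hfi hF0).ne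
  have hyt : Ig / G ≠ ⊤ := (ENNReal.div_lt_top hgi hG0).ne
  have hamgm := ennreal_amgm hxt hyt hl.le ht.le hlt
  calc If ^ l * Ig ^ t
      = Z * ((If / F) ^ l * (Ig / G) ^ t) := by
        rw [ENNReal.div_rpow_of_nonneg _ _ hl.le, ENNReal.div_rpow_of_nonneg _ _ ht.le]
        rw [hZdef]
        rw [div_eq_mul_inv, div_eq_mul_inv]
        calc If ^ l * Ig ^ t
            = (F ^ l * (F ^ l)⁻¹) * (G ^ t * (G ^ t)⁻¹) * (If ^ l * Ig ^ t) := by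
              rw [ENNReal.mul_inv_cancel hFl0 hFlt, ENNReal.mul_inv_cancel hGt0 hGtt]
              ring
          _ = F ^ l * G ^ t * (If ^ l * (F ^ l)⁻¹ * (Ig ^ t * (G ^ t)⁻¹)) := by ring
    _ ≤ Z * (ENNReal.ofReal l * (If / F) + ENNReal.ofReal t * (Ig / G)) := by gcongr
    _ = ENNReal.ofReal l * (Z / F * If) + ENNReal.ofReal t * (Z / G * Ig) := by
        rw [div_eq_mul_inv, div_eq_mul_inv, div_eq_mul_inv, div_eq_mul_inv]
        ring
    _ = ENNReal.ofReal l * (∫⁻ s, ftil s) + ENNReal.ofReal t * (∫⁻ r, gtil r) := by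
        rw [hiftil, higtil]
    _ ≤ ∫⁻ u, h u := hint

section Transfer

variable {Ee Ff : Type*} [MeasureSpace Ee] [MeasureSpace Ff]
  [AddCommMonoid Ee] [Module ℝ Ee] [TopologicalSpace Ee]
  [AddCommMonoid Ff] [Module ℝ Ff] [TopologicalSpace Ff]

lemma measure_image_eq (e : Ee ≃ᵐ Ff) (he : MeasurePreserving e volume volume) (S : Set Ee) :
    volume (e '' S) = volume S := by
  rw [MeasurableEquiv.image_eq_preimage_symm]
  have h2 := he.symm e
  rw [← h2.map_eq, MeasurableEquiv.map_apply]

lemma image_minkowski (e : Ee → Ff) (hadd : ∀ a b : Ee, e (a + b) = e a + e b)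
    (hsmul : ∀ (c : ℝ) (a : Ee), e (c • a) = c • e a) (S T : Set Ee) (c d : ℝ) :
    e '' (c • S + d • T) = c • (e '' S) + d • (e '' T) := by
  ext p
  constructor
  · rintro ⟨q, ⟨q₁, ⟨s, hs, rfl⟩, q₂, ⟨u, hu, rfl⟩, rfl⟩, rfl⟩
    exact ⟨c • e s, ⟨e s, ⟨s, hs, rfl⟩, rfl⟩, d • e u, ⟨e u, ⟨u, hu, rfl⟩, rfl⟩,
      by rw [hadd, hsmul, hsmul]⟩
  · rintro ⟨q₁, ⟨-, ⟨s, hs, rfl⟩, rfl⟩, q₂, ⟨-, ⟨u, hu, rfl⟩, rfl⟩, rfl⟩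
    exact ⟨c • s + d • u, ⟨c • s, ⟨s, hs, rfl⟩, d • u, ⟨u, hu, rfl⟩, rfl⟩,
      by rw [hadd, hsmul, hsmul]⟩

lemma bm_transfer (e : Ee ≃ᵐ Ff) (he : MeasurePreserving e volume volume)
    (hadd : ∀ a b : Ee, e (a + b) = e a + e b)
    (hsmul : ∀ (c : ℝ) (a : Ee), e (c • a) = c • e a)
    (hcont : Continuous e) {l t : ℝ} (hl : 0 < l) (ht : 0 < t) (hlt : l + t = 1)
    (hbm : ∀ K₁ K₂ : Set Ff, IsCompact K₁ → K₁.Nonempty → IsCompact K₂ → K₂.Nonempty →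
      volume K₁ ^ l * volume K₂ ^ t ≤ volume (l • K₁ + t • K₂))
    (K₁ K₂ : Set Ee) (hK₁ : IsCompact K₁) (hK₁ne : K₁.Nonempty)
    (hK₂ : IsCompact K₂) (hK₂ne : K₂.Nonempty) :
    volume K₁ ^ l * volume K₂ ^ t ≤ volume (l • K₁ + t • K₂) := by
  have h1 : volume K₁ = volume (e '' K₁) := (measure_image_eq e he K₁).symm
  have h2 : volume K₂ = volume (e '' K₂) := (measure_image_eq e he K₂).symm
  have h3 : volume (l • K₁ + t • K₂) = volume (e '' (l • K₁ + t • K₂)) :=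
    (measure_image_eq e he _).symm
  rw [h1, h2, h3, image_minkowski e hadd hsmul K₁ K₂ l t]
  exact hbm _ _ (hK₁.image hcont) (hK₁ne.image e) (hK₂.image hcont) (hK₂ne.image e)

end Transfer

lemma bm_prod_step (n : ℕ) {l t : ℝ} (hl : 0 < l) (ht : 0 < t) (hlt : l + t = 1)
    (IH : ∀ K₁ K₂ : Set (Fin n → ℝ), IsCompact K₁ → K₁.Nonempty → IsCompact K₂ → K₂.Nonempty →
      volume K₁ ^ l * volume K₂ ^ t ≤ volume (l • K₁ + t • K₂))
    (K₁ K₂ : Set (ℝ × (Fin n → ℝ))) (hK₁ : IsCompact K₁) (hK₁ne : K₁.Nonempty)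
    (hK₂ : IsCompact K₂) (hK₂ne : K₂.Nonempty) :
    volume K₁ ^ l * volume K₂ ^ t ≤ volume (l • K₁ + t • K₂) := by
  set M := l • K₁ + t • K₂ with hM
  have hMc : IsCompact M := (hK₁.smul l).add (hK₂.smul t)
  have hvol_eq : ∀ S : Set (ℝ × (Fin n → ℝ)), MeasurableSet S →
      volume S = ∫⁻ s : ℝ, volume (Prod.mk s ⁻¹' S) := by
    intro S hS
    have : (volume : Measure (ℝ × (Fin n → ℝ))) = (volume : Measure ℝ).prod volume := rfl
    rw [this, Measure.prod_apply hS]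
  set f := fun s : ℝ => volume (Prod.mk s ⁻¹' K₁) with hf
  set g := fun r : ℝ => volume (Prod.mk r ⁻¹' K₂) with hg
  set h := fun u : ℝ => volume (Prod.mk u ⁻¹' M) with hh
  have hfm : Measurable f := measurable_measure_prodMk_left hK₁.measurableSet
  have hgm : Measurable g := measurable_measure_prodMk_left hK₂.measurableSet
  have hhm : Measurable h := measurable_measure_prodMk_left hMc.measurableSet
  have hslice_sub : ∀ (K : Set (ℝ × (Fin n → ℝ))) (s : ℝ),
      Prod.mk s ⁻¹' K ⊆ Prod.snd '' K := fun K s y hy => ⟨(s, y), hy, rfl⟩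
  have hslice_cpt : ∀ (K : Set (ℝ × (Fin n → ℝ))), IsCompact K → ∀ s : ℝ,
      IsCompact (Prod.mk s ⁻¹' K) := by
    intro K hK s
    apply (hK.image continuous_snd).of_isClosed_subset
      (hK.isClosed.preimage (Continuous.prodMk_right s))
    exact hslice_sub K s
  have hbound : ∀ (K : Set (ℝ × (Fin n → ℝ))), IsCompact K → ∀ s : ℝ,
      volume (Prod.mk s ⁻¹' K) ≤ volume (Prod.snd '' K) :=
    fun K hK s => measure_mono (hslice_sub K s)
  have hBf : volume (Prod.snd '' K₁) ≠ ⊤ := (hK₁.image continuous_snd).measure_lt_top.ne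
  have hBg : volume (Prod.snd '' K₂) ≠ ⊤ := (hK₂.image continuous_snd).measure_lt_top.ne
  have hBh : volume (Prod.snd '' M) ≠ ⊤ := (hMc.image continuous_snd).measure_lt_top.ne
  set F := ⨆ s, f s with hF
  set G := ⨆ r, g r with hG
  set H := ⨆ u, h u with hH
  have hFt : F ≠ ⊤ := ne_top_of_le_ne_top hBf (iSup_le fun s => hbound K₁ hK₁ s)
  have hGt : G ≠ ⊤ := ne_top_of_le_ne_top hBg (iSup_le fun r => hbound K₂ hK₂ r)
  have hHt : H ≠ ⊤ := ne_top_of_le_ne_top hBh (iSup_le fun u => hbound M hMc u)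
  have hIf : ∫⁻ s, f s = volume K₁ := (hvol_eq K₁ hK₁.measurableSet).symm
  have hIg : ∫⁻ r, g r = volume K₂ := (hvol_eq K₂ hK₂.measurableSet).symm
  have hIh : ∫⁻ u, h u = volume M := (hvol_eq M hMc.measurableSet).symm
  have key : ∀ s r, 0 < f s → 0 < g r → f s ^ l * g r ^ t ≤ h (l*s + t*r) := by
    intro s r hfs hgr
    have hS₁ne : (Prod.mk s ⁻¹' K₁).Nonempty := nonempty_of_measure_ne_zero hfs.ne'
    have hS₂ne : (Prod.mk r ⁻¹' K₂).Nonempty := nonempty_of_measure_ne_zero hgr.ne'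
    have hIH := IH _ _ (hslice_cpt K₁ hK₁ s) hS₁ne (hslice_cpt K₂ hK₂ r) hS₂ne
    refine hIH.trans (measure_mono ?_)
    rintro y ⟨y₁, ⟨z₁, hz₁, rfl⟩, y₂, ⟨z₂, hz₂, rfl⟩, rfl⟩
    show (l*s + t*r, l • z₁ + t • z₂) ∈ M
    have : ((l*s + t*r, l • z₁ + t • z₂) : ℝ × (Fin n → ℝ))
        = l • ((s, z₁) : ℝ × (Fin n → ℝ)) + t • ((r, z₂) : ℝ × (Fin n → ℝ)) := rfl
    rw [this]
    exact ⟨l • (s, z₁), ⟨(s, z₁), hz₁, rfl⟩, t • (r, z₂), ⟨(r, z₂), hz₂, rfl⟩, rfl⟩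
  rw [← hIf, ← hIg, ← hIh]
  exact one_dim_PL hfm hgm hhm hFt hGt hHt (fun s => le_iSup f s) (fun r => le_iSup g r)
    (fun u => le_iSup h u) (fun c hc => lt_iSup_iff.mp hc) (fun c hc => lt_iSup_iff.mp hc)
    (hIf ▸ hK₁.measure_lt_top.ne) (hIg ▸ hK₂.measure_lt_top.ne) hl ht hlt key

lemma bm_pi : ∀ (n : ℕ) {l t : ℝ}, 0 < l → 0 < t → l + t = 1 →
    ∀ K₁ K₂ : Set (Fin n → ℝ), IsCompact K₁ → K₁.Nonempty → IsCompact K₂ → K₂.Nonempty →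
    volume K₁ ^ l * volume K₂ ^ t ≤ volume (l • K₁ + t • K₂) := by
  intro n
  induction n with
  | zero =>
    intro l t hl ht hlt K₁ K₂ hK₁ hK₁ne hK₂ hK₂ne
    have huniv : ∀ S : Set (Fin 0 → ℝ), S.Nonempty → S = univ := fun S hS =>
      Subsingleton.eq_univ_of_nonempty hS
    have hvuniv : volume (univ : Set (Fin 0 → ℝ)) = 1 := by
      simp [MeasureTheory.volume_pi, Measure.pi_univ]
    have hMne : (l • K₁ + t • K₂).Nonempty := by
      obtain ⟨a, ha⟩ := hK₁ne
      obtain ⟨b, hb⟩ := hK₂ne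
      exact ⟨l • a + t • b, ⟨l • a, ⟨a, ha, rfl⟩, t • b, ⟨b, hb, rfl⟩, rfl⟩⟩
    have h1 : volume K₁ = 1 := by rw [huniv _ hK₁ne, hvuniv]
    have h2 : volume K₂ = 1 := by rw [huniv _ hK₂ne, hvuniv]
    have h3 : volume (l • K₁ + t • K₂) = 1 := by rw [huniv _ hMne, hvuniv]
    rw [h1, h2, h3]
    simp [ENNReal.one_rpow]
  | succ n IHn =>
    intro l t hl ht hlt K₁ K₂ hK₁ hK₁ne hK₂ hK₂ne
    set e : (Fin (n+1) → ℝ) ≃ᵐ ℝ × (Fin n → ℝ) :=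
      MeasurableEquiv.piFinSuccAbove (fun _ => ℝ) 0 with he_def
    have he : MeasurePreserving e volume volume :=
      volume_preserving_piFinSuccAbove (fun _ : Fin (n+1) => ℝ) 0
    have hadd : ∀ a b : Fin (n+1) → ℝ, e (a + b) = e a + e b := by
      intro a b
      simp only [he_def, MeasurableEquiv.piFinSuccAbove_apply]
      rfl
    have hsmul : ∀ (c : ℝ) (a : Fin (n+1) → ℝ), e (c • a) = c • e a := by
      intro c a
      simp only [he_def, MeasurableEquiv.piFinSuccAbove_apply]
      rfl
    have hcont : Continuous e := by
      have hco : ⇑e = fun f : Fin (n+1) → ℝ =>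
          ((f 0, fun j : Fin n => f (Fin.succAbove 0 j)) : ℝ × (Fin n → ℝ)) := by
        funext f
        simp only [he_def, MeasurableEquiv.piFinSuccAbove_apply]
        rfl
      rw [hco]
      exact (continuous_apply 0).prodMk (continuous_pi fun j => continuous_apply _)
    exact bm_transfer e he hadd hsmul hcont hl ht hlt
      (bm_prod_step n hl ht hlt (IHn hl ht hlt)) K₁ K₂ hK₁ hK₁ne hK₂ hK₂ne

lemma bm_min_euclid {n : ℕ} {K₁ K₂ : Set (EuclideanSpace ℝ (Fin n))}
    (hK₁ : IsCompact K₁) (hK₁ne : K₁.Nonempty) (hK₂ : IsCompact K₂) (hK₂ne : K₂.Nonempty)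
    {l t : ℝ} (hl : 0 < l) (ht : 0 < t) (hlt : l + t = 1) :
    min (volume K₁) (volume K₂) ≤ volume (l • K₁ + t • K₂) := by
  set e : EuclideanSpace ℝ (Fin n) ≃ᵐ (Fin n → ℝ) := (MeasurableEquiv.toLp 2 (Fin n → ℝ)).symm
    with he_def
  have he : MeasurePreserving e volume volume :=
    EuclideanSpace.volume_preserving_symm_measurableEquiv_toLp (Fin n)
  have hrpow : volume K₁ ^ l * volume K₂ ^ t ≤ volume (l • K₁ + t • K₂) := by
    apply bm_transfer e he (fun a b => rfl) (fun c a => rfl) ?_ hl ht hlt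
      (bm_pi n hl ht hlt) K₁ K₂ hK₁ hK₁ne hK₂ hK₂ne
    exact (EuclideanSpace.equiv (Fin n) ℝ).continuous
  refine le_trans ?_ hrpow
  set m := min (volume K₁) (volume K₂) with hm
  rcases eq_or_ne m 0 with hm0 | hm0
  · simp [hm0]
  have hmt : m ≠ ⊤ := ne_top_of_le_ne_top hK₁.measure_lt_top.ne (min_le_left _ _)
  calc m = m ^ (l + t) := by rw [hlt, ENNReal.rpow_one]
    _ = m ^ l * m ^ t := ENNReal.rpow_add l t hm0 hmt
    _ ≤ volume K₁ ^ l * volume K₂ ^ t := by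
        gcongr
        · exact min_le_left _ _
        · exact min_le_right _ _

section Main
variable {n : ℕ}

def affImg (c : ℝ) (v : EuclideanSpace ℝ (Fin n)) (S : Set (EuclideanSpace ℝ (Fin n))) :
    Set (EuclideanSpace ℝ (Fin n)) := (fun p => c • p + v) '' S

lemma affImg_eq_add (c : ℝ) (v : EuclideanSpace ℝ (Fin n)) (S : Set (EuclideanSpace ℝ (Fin n))) :
    affImg c v S = c • S + {v} := by
  rw [affImg, Set.add_singleton, ← Set.image_image (g := (· + v)) (f := (c • ·))]
  rfl

lemma affImg_eq_vadd (c : ℝ) (v : EuclideanSpace ℝ (Fin n)) (S : Set (EuclideanSpace ℝ (Fin n))) :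
    affImg c v S = v +ᵥ (c • S) := by
  ext p
  simp only [affImg, mem_image, Set.mem_vadd_set, Set.mem_smul_set, vadd_eq_add]
  constructor
  · rintro ⟨s, hs, rfl⟩
    exact ⟨c • s, ⟨s, hs, rfl⟩, add_comm v (c • s)⟩
  · rintro ⟨q, ⟨s, hs, rfl⟩, rfl⟩
    exact ⟨s, hs, add_comm (c • s) v⟩

lemma volume_affImg (c : ℝ) (v : EuclideanSpace ℝ (Fin n)) (S : Set (EuclideanSpace ℝ (Fin n))) :
    volume (affImg c v S) = ENNReal.ofReal |c ^ n| * volume S := by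
  rw [affImg_eq_vadd, measure_vadd (μ := volume), Measure.addHaar_smul volume,
    finrank_euclideanSpace_fin]

lemma measurable_affImg {c : ℝ} {v : EuclideanSpace ℝ (Fin n)} {S : Set (EuclideanSpace ℝ (Fin n))}
    (hS : MeasurableSet S) : MeasurableSet (affImg c v S) := by
  rw [affImg_eq_vadd]
  exact (hS.const_smul₀ c).const_vadd v

lemma affImg_comb (c lam t : ℝ) (v₁ v₂ : EuclideanSpace ℝ (Fin n))
    (S₁ S₂ : Set (EuclideanSpace ℝ (Fin n))) :
    lam • affImg c v₁ S₁ + t • affImg c v₂ S₂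
      = affImg c (lam • v₁ + t • v₂) (lam • S₁ + t • S₂) := by
  rw [affImg_eq_add, affImg_eq_add, affImg_eq_add, smul_add lam, smul_add t, smul_add c,
    Set.smul_set_singleton, Set.smul_set_singleton, smul_smul lam c, smul_smul t c,
    smul_smul c lam, smul_smul c t]
  calc (lam * c) • S₁ + {lam • v₁} + ((t * c) • S₂ + {t • v₂})
      = ((lam * c) • S₁ + (t * c) • S₂) + ({lam • v₁} + {t • v₂}) := add_add_add_comm _ _ _ _
    _ = (c * lam) • S₁ + (c * t) • S₂ + {lam • v₁ + t • v₂} := by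
        rw [Set.singleton_add_singleton, mul_comm lam c, mul_comm t c]

lemma translate_unique {S : Set (EuclideanSpace ℝ (Fin n))} (hne : S.Nonempty)
    (hbd : Bornology.IsBounded S) {v w : EuclideanSpace ℝ (Fin n)}
    (h : S + {v} = S + {w}) : v = w := by
  by_contra hvw
  have hu0 : v - w ≠ 0 := sub_ne_zero.2 hvw
  have hstep : ∀ s ∈ S, s + (v - w) ∈ S := by
    intro s hs
    have h1 : s + v ∈ S + {w} := by
      rw [← h]; exact ⟨s, hs, v, rfl, rfl⟩
    obtain ⟨s', hs', w', hw', hsum⟩ := h1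
    rw [mem_singleton_iff] at hw'
    rw [hw'] at hsum
    have h3 : s' = s + (v - w) := by
      have h2 : s' = s + v - w := eq_sub_of_add_eq hsum
      rw [h2]; abel
    rwa [h3] at hs'
  obtain ⟨s₀, hs₀⟩ := hne
  have hiter : ∀ m : ℕ, s₀ + m • (v - w) ∈ S := by
    intro m
    induction m with
    | zero => simpa using hs₀
    | succ m ih =>
      have h3 := hstep _ ih
      have h4 : s₀ + m • (v - w) + (v - w) = s₀ + (m + 1) • (v - w) := by
        rw [succ_nsmul]; abel
      rwa [h4] at h3
  obtain ⟨R, hR⟩ := hbd.subset_closedBall 0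
  have hu : 0 < ‖v - w‖ := norm_pos_iff.2 hu0
  obtain ⟨m, hm⟩ := exists_nat_gt ((R + ‖s₀‖) / ‖v - w‖)
  have hmem := hR (hiter m)
  rw [Metric.mem_closedBall, dist_zero_right] at hmem
  have h5 : ‖(m : ℕ) • (v - w)‖ ≤ ‖s₀ + m • (v - w)‖ + ‖s₀‖ := by
    have h9 := norm_sub_le (s₀ + m • (v - w)) s₀
    simpa using h9
  have h6 : ‖(m : ℕ) • (v - w)‖ = (m : ℝ) * ‖v - w‖ := by
    rw [← Nat.cast_smul_eq_nsmul ℝ, norm_smul]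
    simp
  have h7 : (m : ℝ) * ‖v - w‖ ≤ R + ‖s₀‖ := by
    rw [← h6]
    exact h5.trans (by linarith)
  have h8 : (R + ‖s₀‖) / ‖v - w‖ < m := hm
  rw [div_lt_iff₀ hu] at h8
  linarith

lemma corner_bound (T A : Set (EuclideanSpace ℝ (Fin n))) (hmA : MeasurableSet A)
    (y : EuclideanSpace ℝ (Fin n)) (hy : y ∈ A)
    {lam t : ℝ} (hlam : 0 < lam) (hlam1 : lam ≤ 1) (hlt : lam + t = 1)
    (i : ℕ) :
    volume (affImg (lam ^ i) ((1 - lam ^ i) • y) A \ A)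
      ≤ (i : ℝ≥0∞) * volume ((t • A + lam • A) \ A) := by
  induction i with
  | zero =>
    have h0 : affImg (lam ^ 0) ((1 - lam ^ 0) • y) A = A := by
      simp only [pow_zero, sub_self, zero_smul, affImg, one_smul, add_zero, image_id']
    rw [h0]
    simp
  | succ i ih =>
    set D := volume ((t • A + lam • A) \ A) with hD
    set C := affImg (lam ^ i) ((1 - lam ^ i) • y) A with hC
    have ht' : t = 1 - lam := by linarith
    have hkey : affImg (lam ^ (i+1)) ((1 - lam ^ (i+1)) • y) A = lam • C + {t • y} := by
      rw [hC, affImg_eq_add, affImg_eq_add, smul_add, smul_smul, Set.smul_set_singleton,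
        smul_smul, add_assoc, Set.singleton_add_singleton, ← add_smul]
      have e2 : lam * lam ^ i = lam ^ (i+1) := (pow_succ' lam i).symm
      have e3 : lam * (1 - lam ^ i) + t = 1 - lam ^ (i+1) := by
        rw [ht', pow_succ]; ring
      rw [e2, e3]
    have hdec : (lam • C + {t • y}) \ A
        ⊆ (lam • (C \ A) + {t • y}) ∪ ((lam • (C ∩ A) + {t • y}) \ A) := by
      rintro p ⟨⟨q, ⟨s, hs, rfl⟩, r, hr, rfl⟩, hpA⟩
      rw [mem_singleton_iff] at hr
      subst hr
      by_cases hsA : s ∈ A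
      · exact Or.inr ⟨⟨lam • s, ⟨s, ⟨hs, hsA⟩, rfl⟩, t • y, rfl, rfl⟩, hpA⟩
      · exact Or.inl ⟨lam • s, ⟨s, ⟨hs, hsA⟩, rfl⟩, t • y, rfl, rfl⟩
    have h1 : volume (lam • (C \ A) + {t • y}) ≤ volume (C \ A) := by
      rw [← affImg_eq_add, volume_affImg]
      calc ENNReal.ofReal |lam ^ n| * volume (C \ A) ≤ 1 * volume (C \ A) := by
            gcongr
            rw [abs_of_pos (pow_pos hlam n)]
            exact ENNReal.ofReal_le_one.2 (pow_le_one₀ hlam.le hlam1)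
        _ = volume (C \ A) := one_mul _
    have h2 : lam • (C ∩ A) + {t • y} ⊆ t • A + lam • A := by
      rintro p ⟨q, ⟨s, ⟨hsC, hsA⟩, rfl⟩, r, hr, rfl⟩
      rw [mem_singleton_iff] at hr
      subst hr
      exact ⟨t • y, ⟨y, hy, rfl⟩, lam • s, ⟨s, hsA, rfl⟩, add_comm _ _⟩
    calc volume (affImg (lam ^ (i+1)) ((1 - lam ^ (i+1)) • y) A \ A)
        = volume ((lam • C + {t • y}) \ A) := by rw [hkey]
      _ ≤ volume ((lam • (C \ A) + {t • y}) ∪ ((lam • (C ∩ A) + {t • y}) \ A)) :=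
          measure_mono hdec
      _ ≤ volume (lam • (C \ A) + {t • y}) + volume ((lam • (C ∩ A) + {t • y}) \ A) :=
          measure_union_le _ _
      _ ≤ (i : ℝ≥0∞) * D + D := by
          gcongr
          · exact h1.trans ih
          · exact measure_mono (diff_subset_diff_left h2)
      _ = ((i + 1 : ℕ) : ℝ≥0∞) * D := by push_cast; ring

end Main

lemma main_aux {n : ℕ} (x : Fin (n + 1) → EuclideanSpace ℝ (Fin n))
    (T : Set (EuclideanSpace ℝ (Fin n))) (hT : T = convexHull ℝ (Set.range x))
    (hTvol : volume T = 1)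
    (A : Set (EuclideanSpace ℝ (Fin n))) (hA : A ⊆ T) (hmA : MeasurableSet A)
    (hvx : Set.range x ⊆ A)
    {t lam : ℝ} (ht0 : 0 < t) (hlam0 : 0 < lam) (hlam1 : lam < 1) (hlt : lam + t = 1)
    (i : ℕ) :
    ∀ (k : ℕ) (B : Set (EuclideanSpace ℝ (Fin n))),
      B ∈ avgFamily lam
        {S | ∃ j : Fin (n + 1), S = (fun p => (1 - lam ^ i) • x j + lam ^ i • p) '' T} k →
      ∃ w, B = affImg (lam ^ i) w T ∧
        volume (affImg (lam ^ i) w A \ A)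
          ≤ ((i + 2 * k : ℕ) : ℝ≥0∞) * volume ((t • A + lam • A) \ A) := by
  intro k
  induction k with
  | zero =>
    intro B hB
    obtain ⟨j, hBj⟩ := hB
    refine ⟨(1 - lam ^ i) • x j, ?_, ?_⟩
    · rw [hBj]
      have hfun : (fun p => (1 - lam ^ i) • x j + lam ^ i • p)
          = fun p : EuclideanSpace ℝ (Fin n) => lam ^ i • p + (1 - lam ^ i) • x j :=
        funext fun p => add_comm _ _
      rw [hfun]
      rfl
    · have hcb := corner_bound T A hmA (x j) (hvx ⟨j, rfl⟩) hlam0 hlam1.le hlt i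
      have hcast : ((i + 2 * 0 : ℕ) : ℝ≥0∞) = (i : ℝ≥0∞) := by norm_num
      rw [hcast]
      exact hcb
  | succ k IH =>
    intro B hB
    obtain ⟨B₁, hB₁, B₂, hB₂, rfl⟩ := hB
    obtain ⟨w₁, hw₁, hb₁⟩ := IH B₁ hB₁
    obtain ⟨w₂, hw₂, hb₂⟩ := IH B₂ hB₂
    have ht' : 1 - lam = t := by linarith
    set c := lam ^ i with hc
    have hc0 : 0 < c := pow_pos hlam0 i
    set w := lam • w₁ + t • w₂ with hw
    have hTc : Convex ℝ T := hT ▸ convex_convexHull ℝ _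
    have hTcomb : lam • T + t • T = T := by
      rw [← Convex.add_smul hTc hlam0.le ht0.le, hlt, one_smul]
    refine ⟨w, ?_, ?_⟩
    · rw [hw₁, hw₂, ht', affImg_comb, hTcomb]
    · -- the volume estimate
      set D := volume ((t • A + lam • A) \ A) with hD
      set γ := ENNReal.ofReal |c ^ n| with hγ
      have hγle : γ ≤ 1 := by
        rw [hγ, abs_of_pos (pow_pos hc0 n)]
        exact ENNReal.ofReal_le_one.2 (pow_le_one₀ hc0.le (pow_le_one₀ hlam0.le hlam1.le))
      have hvA1 : volume A ≤ 1 := hTvol ▸ measure_mono hA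
      have hvAt : volume A ≠ ⊤ := ne_top_of_le_ne_top ENNReal.one_ne_top hvA1
      have hsumT : t • A + lam • A ⊆ T := by
        have hsub : t • A + lam • A ⊆ t • T + lam • T :=
          Set.add_subset_add (Set.smul_set_mono hA) (Set.smul_set_mono hA)
        have hTcomb' : t • T + lam • T = T := by
          rw [← Convex.add_smul hTc ht0.le hlam0.le,
            (by linarith : t + lam = 1), one_smul]
        rwa [hTcomb'] at hsub
      have hDt : D ≠ ⊤ := by
        rw [hD]
        exact ne_top_of_le_ne_top ENNReal.one_ne_top
          (hTvol ▸ measure_mono (diff_subset.trans hsumT))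
      set C₁ := affImg c w₁ A with hC₁
      set C₂ := affImg c w₂ A with hC₂
      set C' := affImg c w A with hC'
      have hC₁m : MeasurableSet C₁ := measurable_affImg hmA
      have hC₂m : MeasurableSet C₂ := measurable_affImg hmA
      have hvC₁ : volume C₁ = γ * volume A := volume_affImg c w₁ A
      have hvC₂ : volume C₂ = γ * volume A := volume_affImg c w₂ A
      have hvC' : volume C' = γ * volume A := volume_affImg c w A
      set X := C₁ ∩ A with hX
      set Y := C₂ ∩ A with hY
      have hXv : volume X + volume (C₁ \ A) = γ * volume A := by
        rw [← hvC₁]; exact measure_inter_add_diff C₁ hmA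
      have hYv : volume Y + volume (C₂ \ A) = γ * volume A := by
        rw [← hvC₂]; exact measure_inter_add_diff C₂ hmA
      set M := ((i + 2 * k : ℕ) : ℝ≥0∞) * D with hM
      have hgoalcast : ((i + 2 * (k + 1) : ℕ) : ℝ≥0∞) * D = M + 2 * D := by
        rw [hM]; push_cast; ring
      rw [hgoalcast]
      -- the enveloping set
      set WW := affImg c w (t • A + lam • A) with hWW
      have hWWcomb : lam • C₁ + t • C₂ = WW := by
        rw [hC₁, hC₂, affImg_comb, hWW, add_comm (lam • A) (t • A)]
      have hC'W : C' ⊆ WW := by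
        rintro p ⟨a, ha, rfl⟩
        refine ⟨t • a + lam • a, ⟨t • a, ⟨a, ha, rfl⟩, lam • a, ⟨a, ha, rfl⟩, rfl⟩, ?_⟩
        have : t • a + lam • a = a := by
          rw [← add_smul, (by linarith : t + lam = 1), one_smul]
        rw [this]
      have hvWW : volume WW ≤ γ * (volume A + D) := by
        rw [hWW, volume_affImg, ← hγ]
        gcongr
        calc volume (t • A + lam • A)
            ≤ volume (A ∪ ((t • A + lam • A) \ A)) := measure_mono (fun p hp => by
              by_cases hpA : p ∈ A
              · exact Or.inl hpA
              · exact Or.inr ⟨hp, hpA⟩)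
          _ ≤ volume A + D := measure_union_le _ _
      -- degenerate cases
      rcases eq_or_ne (volume X) 0 with hX0 | hX0
      · have hAM : γ * volume A ≤ M := by
          rw [← hXv, hX0, zero_add]
          exact hb₁
        calc volume (C' \ A) ≤ volume C' := measure_mono diff_subset
          _ = γ * volume A := hvC'
          _ ≤ M := hAM
          _ ≤ M + 2 * D := le_self_add
      rcases eq_or_ne (volume Y) 0 with hY0 | hY0
      · have hAM : γ * volume A ≤ M := by
          rw [← hYv, hY0, zero_add]
          exact hb₂
        calc volume (C' \ A) ≤ volume C' := measure_mono diff_subset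
          _ = γ * volume A := hvC'
          _ ≤ M := hAM
          _ ≤ M + 2 * D := le_self_add
      -- main case
      apply ENNReal.le_of_forall_pos_le_add
      intro ε hε _
      have hXt : volume X ≠ ⊤ := ne_top_of_le_ne_top hvAt (measure_mono inter_subset_right)
      have hYt : volume Y ≠ ⊤ := ne_top_of_le_ne_top hvAt (measure_mono inter_subset_right)
      have hεne : ((ε : ℝ≥0∞)) ≠ 0 := by exact_mod_cast hε.ne'
      obtain ⟨KX, hKXsub, hKXc, hKXv⟩ := (hC₁m.inter hmA).exists_isCompact_lt_add hXt hεne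
      obtain ⟨KY, hKYsub, hKYc, hKYv⟩ := (hC₂m.inter hmA).exists_isCompact_lt_add hYt hεne
      obtain ⟨x₀, hx₀⟩ : X.Nonempty := nonempty_of_measure_ne_zero hX0
      obtain ⟨y₀, hy₀⟩ : Y.Nonempty := nonempty_of_measure_ne_zero hY0
      set KX' := insert x₀ KX with hKX'
      set KY' := insert y₀ KY with hKY'
      have hKX'c : IsCompact KX' := hKXc.insert x₀
      have hKY'c : IsCompact KY' := hKYc.insert y₀
      have hKX'sub : KX' ⊆ X := insert_subset hx₀ hKXsub
      have hKY'sub : KY' ⊆ Y := insert_subset hy₀ hKYsub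
      set EK := lam • KX' + t • KY' with hEK
      have hEKc : IsCompact EK := (hKX'c.smul lam).add (hKY'c.smul t)
      have hEKt : volume EK ≠ ⊤ := hEKc.measure_lt_top.ne
      have hbm := bm_min_euclid hKX'c (insert_nonempty _ _) hKY'c (insert_nonempty _ _)
        hlam0 ht0 hlt
      have hγA : γ * volume A ≤ volume EK + (M + ε) := by
        rcases min_cases (volume KX') (volume KY') with ⟨hmin, -⟩ | ⟨hmin, -⟩
        · calc γ * volume A = volume X + volume (C₁ \ A) := hXv.symm
            _ ≤ (volume KX + ε) + M := add_le_add hKXv.le hb₁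
            _ ≤ (volume KX' + ε) + M := by
                gcongr
                exact subset_insert _ _
            _ = volume KX' + (M + ε) := by ring
            _ ≤ volume EK + (M + ε) :=
                add_le_add (le_trans (le_of_eq hmin.symm) hbm) le_rfl
        · calc γ * volume A = volume Y + volume (C₂ \ A) := hYv.symm
            _ ≤ (volume KY + ε) + M := add_le_add hKYv.le hb₂
            _ ≤ (volume KY' + ε) + M := by
                gcongr
                exact subset_insert _ _
            _ = volume KY' + (M + ε) := by ring
            _ ≤ volume EK + (M + ε) :=
                add_le_add (le_trans (le_of_eq hmin.symm) hbm) le_rfl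
      have hEK_W : EK ⊆ WW := by
        rw [← hWWcomb, hEK]
        exact Set.add_subset_add (Set.smul_set_mono (hKX'sub.trans inter_subset_left))
          (Set.smul_set_mono (hKY'sub.trans inter_subset_left))
      have hEK_A : EK \ A ⊆ (t • A + lam • A) \ A := by
        apply diff_subset_diff_left
        have hsub : EK ⊆ lam • A + t • A :=
          Set.add_subset_add (Set.smul_set_mono (hKX'sub.trans inter_subset_right))
            (Set.smul_set_mono (hKY'sub.trans inter_subset_right))
        rwa [add_comm (lam • A) (t • A)] at hsub
      have hsplit : volume (C' \ A) ≤ volume (WW \ EK) + volume (EK \ A) := by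
        refine le_trans (measure_mono ?_) (measure_union_le _ _)
        rintro p ⟨hpC', hpA⟩
        by_cases hpEK : p ∈ EK
        · exact Or.inr ⟨hpEK, hpA⟩
        · exact Or.inl ⟨hC'W hpC', hpEK⟩
      have hWE : volume (WW \ EK) ≤ γ * D + (M + ε) := by
        rw [measure_diff hEK_W hEKc.measurableSet.nullMeasurableSet hEKt]
        apply tsub_le_iff_right.2
        calc volume WW ≤ γ * (volume A + D) := hvWW
          _ = γ * volume A + γ * D := mul_add _ _ _
          _ ≤ (volume EK + (M + ε)) + γ * D := add_le_add hγA le_rfl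
          _ = γ * D + (M + ε) + volume EK := by ring
      calc volume (C' \ A) ≤ volume (WW \ EK) + volume (EK \ A) := hsplit
        _ ≤ (γ * D + (M + ε)) + D := add_le_add hWE (measure_mono hEK_A)
        _ ≤ (1 * D + (M + ε)) + D := by gcongr
        _ = (M + 2 * D) + ε := by ring

/-- Fractal homogeneity lemma: for a simplex `T` of volume 1 with vertices `x j`,
`A ⊆ T` containing the vertices with `|A| = 1 - δ`, `t ∈ (0,1/2]`, `λ = 1 - t`,
and `T' ∈ 𝒯_{i,k}` (where `𝒯_{i,0}` consists of the corner `λⁱ`-scaled simplices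
`(1-λⁱ)x j + λⁱT` and `𝒯_{i,k+1}` of `λ`-averages of pairs from `𝒯_{i,k}`), the
translate `(λⁱA)_{T'}` of `λⁱA` carrying `λⁱT` to `T'` satisfies
`|(λⁱA)_{T'} \ A| ≤ (i + 2k)·δ(A;t)`. -/
theorem stmt5 {n : ℕ} (x : Fin (n + 1) → EuclideanSpace ℝ (Fin n))
    (hx : AffineIndependent ℝ x)
    (T : Set (EuclideanSpace ℝ (Fin n))) (hT : T = convexHull ℝ (Set.range x))
    (hTvol : volume T = 1)
    (A : Set (EuclideanSpace ℝ (Fin n))) (hA : A ⊆ T) (hmA : MeasurableSet A)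
    (hvx : Set.range x ⊆ A)
    (δ : ℝ) (hδ : 0 ≤ δ) (hAvol : volume A = ENNReal.ofReal (1 - δ))
    (t : ℝ) (ht : t ∈ Set.Ioc (0:ℝ) (1/2)) (lam : ℝ) (hlam : lam = 1 - t)
    (i k : ℕ) (T' : Set (EuclideanSpace ℝ (Fin n)))
    (hT' : T' ∈ avgFamily lam
      {S | ∃ j : Fin (n + 1), S = (fun p => (1 - lam ^ i) • x j + lam ^ i • p) '' T} k)
    (v : EuclideanSpace ℝ (Fin n)) (hv : T' = (fun p => lam ^ i • p + v) '' T) :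
    volume (((fun p => lam ^ i • p + v) '' A) \ A) ≤
      (i + 2 * k : ℕ) * volume ((t • A + (1 - t) • A) \ A) := by
  have ht0 : 0 < t := ht.1
  have hlam0 : 0 < lam := by rw [hlam]; linarith [ht.2]
  have hlam1 : lam < 1 := by rw [hlam]; linarith [ht.1]
  have hlt : lam + t = 1 := by rw [hlam]; ring
  have h1t : 1 - t = lam := by rw [hlam]
  rw [h1t]
  obtain ⟨w, hw, hbound⟩ := main_aux x T hT hTvol A hA hmA hvx ht0 hlam0 hlam1 hlt i k T' hT'
  have hTcpt : IsCompact T := hT ▸ (Set.finite_range x).isCompact_convexHull ℝ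
  have hTne : T.Nonempty := hT ▸ ⟨x 0, subset_convexHull ℝ _ ⟨0, rfl⟩⟩
  have hST : (lam ^ i • T : Set (EuclideanSpace ℝ (Fin n))).Nonempty := hTne.smul_set
  have hSTbd : Bornology.IsBounded (lam ^ i • T) := (hTcpt.smul (lam ^ i)).isBounded
  have heq : lam ^ i • T + {v} = lam ^ i • T + {w} := by
    rw [← affImg_eq_add, ← affImg_eq_add]
    exact (hv.symm.trans hw :)
  have hvw : v = w := translate_unique hST hSTbd heq
  rw [hvw]
  exact hbound
end

section
/- Simplex averaging density lemma: let T ⊆ ℝⁿ be a simplex with vertices x₀,…,xₙ, let α, μ ∈ (0,1) and λ ∈ [1/2, 1). Define 𝒯₀(λ;μ;T) = {μT + (1−μ)xⱼ : 0 ≤ j ≤ n} and 𝒯_k(λ;μ;T) = {λB₁ + (1−λ)B₂ : B₁, B₂ ∈ 𝒯_{k−1}(λ;μ;T)}. Then every translate T' ⊆ T of αⁿμT is completely contained in some element of 𝒯_{k'}(λ;μ;T), where k' = Σ_{j=1}^{n} ⌈log(α^{j−1}(1−α)μ)/log(λ)⌉. -/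
open MeasureTheory Set
open scoped ENNReal Pointwise

set_option maxHeartbeats 2000000

namespace Stmt9Aux

variable {E F : Type*} [AddCommGroup E] [Module ℝ E] [AddCommGroup F] [Module ℝ F]

def reach (lam : ℝ) (A : Set E) : ℕ → Set E
  | 0 => A
  | k+1 => {p | ∃ a ∈ reach lam A k, ∃ b ∈ reach lam A k, p = lam • a + (1-lam) • b}

lemma reach_succ_self (lam : ℝ) (A : Set E) (k : ℕ) :
    reach lam A k ⊆ reach lam A (k+1) := fun p hp => ⟨p, hp, p, hp, by module⟩

lemma reach_mono (lam : ℝ) (A : Set E) {k l : ℕ} (h : k ≤ l) :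
    reach lam A k ⊆ reach lam A l := by
  induction l with
  | zero => simpa [Nat.le_zero.mp h] using subset_rfl
  | succ l ih =>
    rcases Nat.lt_or_ge k (l+1) with h' | h'
    · exact (ih (Nat.lt_succ_iff.mp h')).trans (reach_succ_self lam A l)
    · have : k = l + 1 := le_antisymm h h'
      subst this; exact subset_rfl

lemma reach_map (lam : ℝ) (f : E → F) {A : Set E} {B : Set F}
    (hf : ∀ a b : E, f (lam • a + (1-lam) • b) = lam • f a + (1-lam) • f b)
    (hA : ∀ a ∈ A, f a ∈ B) :
    ∀ {k : ℕ} {p : E}, p ∈ reach lam A k → f p ∈ reach lam B k := by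
  intro k
  induction k with
  | zero => exact fun hp => hA _ hp
  | succ k ih =>
    rintro p ⟨a, ha, b, hb, rfl⟩
    exact ⟨f a, ih ha, f b, ih hb, hf a b⟩

lemma combo_mem_reach (lam : ℝ) {A : Set E} {K : ℕ} {p q : E}
    (hp : p ∈ reach lam A K) (hq : q ∈ reach lam A K) :
    ∀ {k : ℕ} {θ : ℝ}, θ ∈ reach lam ({0,1} : Set ℝ) k →
      θ • p + (1-θ) • q ∈ reach lam A (K + k) := by
  intro k
  induction k with
  | zero =>
    rintro θ (rfl | rfl)
    · simpa using hq
    · simpa using hp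
  | succ k ih =>
    rintro θ ⟨a, ha, b, hb, rfl⟩
    have h : lam • a + (1-lam) • b = lam * a + (1-lam) * b := by
      rw [smul_eq_mul, smul_eq_mul]
    rw [h]
    exact ⟨a • p + (1-a) • q, ih ha, b • p + (1-b) • q, ih hb, by module⟩

lemma zero_mem_net (lam : ℝ) (k : ℕ) : (0:ℝ) ∈ reach lam ({0,1} : Set ℝ) k := by
  induction k with
  | zero => exact Or.inl rfl
  | succ k ih => exact ⟨0, ih, 0, ih, by rw [smul_eq_mul, smul_eq_mul]; ring⟩

lemma one_mem_net (lam : ℝ) (k : ℕ) : (1:ℝ) ∈ reach lam ({0,1} : Set ℝ) k := by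
  induction k with
  | zero => exact Or.inr rfl
  | succ k ih => exact ⟨1, ih, 1, ih, by rw [smul_eq_mul, smul_eq_mul]; ring⟩

lemma net (lam : ℝ) (hl1 : 1/2 ≤ lam) (hl2 : lam < 1) :
    ∀ (k : ℕ) (t : ℝ), 0 ≤ t → t ≤ 1 →
      ∃ θ ∈ reach lam ({0,1} : Set ℝ) k, 0 ≤ θ ∧ θ ≤ t ∧ t - lam ^ k ≤ θ := by
  have hl0 : 0 < lam := by linarith
  intro k
  induction k with
  | zero =>
    intro t ht0 ht1
    exact ⟨0, Or.inl rfl, le_refl 0, ht0, by simpa using ht1⟩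
  | succ k ih =>
    intro t ht0 ht1
    rcases le_or_gt t lam with hcase | hcase
    · obtain ⟨θ', hθ'mem, hθ'0, hθ'le, hθ'ge⟩ := ih (t / lam)
        (div_nonneg ht0 hl0.le) ((div_le_one hl0).mpr hcase)
      refine ⟨lam * θ', ⟨θ', hθ'mem, 0, zero_mem_net lam k, by rw [smul_eq_mul, smul_eq_mul]; ring⟩,
        by positivity, ?_, ?_⟩
      · calc lam * θ' ≤ lam * (t / lam) := by
              exact mul_le_mul_of_nonneg_left hθ'le hl0.le
          _ = t := by field_simp
      · have h1 : t / lam - lam ^ k ≤ θ' := hθ'ge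
        have := mul_le_mul_of_nonneg_left h1 hl0.le
        have h2 : lam * (t / lam) = t := by field_simp
        calc t - lam ^ (k+1) = lam * (t / lam - lam ^ k) := by
              rw [mul_sub, h2]; ring
          _ ≤ lam * θ' := this
    · obtain ⟨θ', hθ'mem, hθ'0, hθ'le, hθ'ge⟩ := ih ((t - (1 - lam)) / lam)
        (div_nonneg (by linarith) hl0.le) ((div_le_one hl0).mpr (by linarith))
      refine ⟨lam * θ' + (1 - lam), ⟨θ', hθ'mem, 1, one_mem_net lam k, by rw [smul_eq_mul, smul_eq_mul]; ring⟩,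
        by nlinarith, ?_, ?_⟩
      · have := mul_le_mul_of_nonneg_left hθ'le hl0.le
        have h2 : lam * ((t - (1 - lam)) / lam) = t - (1 - lam) := by field_simp
        nlinarith
      · have := mul_le_mul_of_nonneg_left hθ'ge hl0.le
        have h4 : lam * ((t - (1 - lam)) / lam - lam ^ k) = t - (1 - lam) - lam ^ (k+1) := by
          field_simp; ring
        linarith [h4 ▸ this]



open Finset in
lemma key {n : ℕ} {lam c : ℝ} (hl1 : 1/2 ≤ lam) (hl2 : lam < 1) (hc0 : 0 < c) (hc1 : c ≤ 1)
    (ε : ℕ → ℝ) (kk : ℕ → ℕ) (hε : ∀ j, 0 < ε j) (hkk : ∀ j, lam ^ kk j ≤ ε j) :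
    ∀ (m : ℕ) (J : Finset (Fin (n+1))), J.card = m + 1 →
      ∀ u : Fin (n+1) → ℝ, (∀ i, 0 ≤ u i) →
      c + ∑ j ∈ Finset.range m, ε j ≤ ∑ i ∈ J, u i →
      ∃ s ∈ reach lam {w : Fin (n+1) → ℝ | ∃ j, w = fun i => if i = j then c else 0}
          (∑ j ∈ Finset.range m, kk j),
        (∀ i, 0 ≤ s i) ∧ (∀ i, i ∉ J → s i = 0) ∧ (∑ i, s i = c) ∧ (∀ i, s i ≤ u i) := by
  intro m
  induction m with
  | zero =>
    intro J hJ u hu hbudget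
    obtain ⟨j₀, rfl⟩ := Finset.card_eq_one.mp hJ
    simp only [Finset.sum_singleton, Finset.range_zero, Finset.sum_empty, add_zero] at hbudget
    refine ⟨fun i => if i = j₀ then c else 0, ?_, ?_, ?_, ?_, ?_⟩
    · exact ⟨j₀, rfl⟩
    · intro i; dsimp only; split <;> [exact hc0.le; exact le_refl 0]
    · intro i hi; simp only [Finset.mem_singleton] at hi; simp [hi]
    · simp
    · intro i; dsimp only; split
      · rename_i h; rw [h]; exact hbudget
      · exact hu i
  | succ m ih =>
    intro J hJ u hu hbudget
    have hJne : J.Nonempty := Finset.card_pos.mp (by omega)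
    obtain ⟨j₀, hj₀⟩ := hJne
    set J' : Finset (Fin (n+1)) := J.erase j₀ with hJ'def
    have hJ'card : J'.card = m + 1 := by
      rw [hJ'def, Finset.card_erase_of_mem hj₀, hJ]
      omega
    have hsumJ : ∑ i ∈ J, u i = u j₀ + ∑ i ∈ J', u i := by
      rw [hJ'def, Finset.add_sum_erase _ _ hj₀]
    have hE0 : (0:ℝ) ≤ ∑ j ∈ Finset.range m, ε j :=
      Finset.sum_nonneg (fun j _ => (hε j).le)
    rw [Finset.sum_range_succ] at hbudget
    have hKsucc : ∑ j ∈ Finset.range (m+1), kk j = (∑ j ∈ Finset.range m, kk j) + kk m :=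
      Finset.sum_range_succ kk m
    set K : ℕ := ∑ j ∈ Finset.range m, kk j with hK
    have hmono : reach lam {w : Fin (n+1) → ℝ | ∃ j, w = fun i => if i = j then c else 0} K ⊆
        reach lam {w : Fin (n+1) → ℝ | ∃ j, w = fun i => if i = j then c else 0}
          (∑ j ∈ Finset.range (m+1), kk j) := by
      rw [hKsucc]; exact reach_mono _ _ (Nat.le_add_right _ _)
    have hgen : (fun i => if i = j₀ then c else 0) ∈
        reach lam {w : Fin (n+1) → ℝ | ∃ j, w = fun i => if i = j then c else 0} K :=
      reach_mono _ _ (Nat.zero_le K) ⟨j₀, rfl⟩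
    rcases le_or_gt (u j₀) (ε m) with hcase1 | hcase1
    · -- coordinate j₀'s demand is small: ignore it
      obtain ⟨s, hsreach, hs0, hssupp, hssum, hsle⟩ := ih J' hJ'card u hu (by linarith)
      exact ⟨s, hmono hsreach, hs0,
        fun i hi => hssupp i (fun h => hi (Finset.mem_of_mem_erase h)), hssum, hsle⟩
    · rcases lt_or_ge (c + ε m) (u j₀) with hcase2 | hcase2
      · -- huge demand at j₀: the generator at j₀ works
        refine ⟨fun i => if i = j₀ then c else 0, hmono hgen, ?_, ?_, by simp, ?_⟩
        · intro i; dsimp only; split <;> [exact hc0.le; exact le_refl 0]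
        · intro i hi; have : i ≠ j₀ := fun h => hi (h ▸ hj₀); simp [this]
        · intro i; dsimp only; split
          · rename_i h; rw [h]; nlinarith [hε m]
          · exact hu i
      · -- main case : ε m < u j₀ ≤ c + ε m
        have hl0 : (0:ℝ) < lam := by linarith
        have hεm := hε m
        have hhi0 : 0 ≤ (c - u j₀ + ε m) / c := by
          apply div_nonneg _ hc0.le; linarith
        have hhi1 : (c - u j₀ + ε m) / c ≤ 1 := by
          rw [div_le_one hc0]; linarith
        obtain ⟨θ, hθmem, hθ0, hθle, hθge⟩ := net lam hl1 hl2 (kk m) _ hhi0 hhi1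
        have hθ1 : θ ≤ 1 := hθle.trans hhi1
        have hθc : c - u j₀ ≤ θ * c := by
          have h1 : lam ^ kk m ≤ ε m / c := by
            calc lam ^ kk m ≤ ε m := hkk m
              _ ≤ ε m / c := by
                  rw [le_div_iff₀ hc0]; nlinarith
          have h2 : (c - u j₀ + ε m) / c - ε m / c ≤ θ := by linarith
          have h3 : (c - u j₀ + ε m) / c - ε m / c = (c - u j₀) / c := by ring
          rw [h3] at h2
          calc c - u j₀ = ((c - u j₀)/c) * c := by field_simp
            _ ≤ θ * c := by nlinarith
        rcases eq_or_lt_of_le hθ0 with hθz | hθpos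
        · -- θ = 0 : generator at j₀ works
          refine ⟨fun i => if i = j₀ then c else 0, hmono hgen, ?_, ?_, by simp, ?_⟩
          · intro i; dsimp only; split <;> [exact hc0.le; exact le_refl 0]
          · intro i hi; have : i ≠ j₀ := fun h => hi (h ▸ hj₀); simp [this]
          · intro i; dsimp only; split
            · rename_i h; rw [h]
              have h5 : c - u j₀ ≤ 0 := by nlinarith [hθc, hθz]
              linarith
            · exact hu i
        · -- θ > 0 : recurse and combine
          have hbudget' : c + ∑ j ∈ Finset.range m, ε j ≤ ∑ i ∈ J', (u i / θ) := by
            rw [← Finset.sum_div, le_div_iff₀ hθpos]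
            have hθle' : θ * c ≤ c - u j₀ + ε m := by
              have := mul_le_mul_of_nonneg_right hθle hc0.le
              calc θ * c ≤ ((c - u j₀ + ε m)/c) * c := this
                _ = c - u j₀ + ε m := by field_simp
            have hEθ : (∑ j ∈ Finset.range m, ε j) * θ ≤ ∑ j ∈ Finset.range m, ε j := by
              nlinarith
            have hsum' : c + ∑ j ∈ Finset.range m, ε j + ε m - u j₀ ≤ ∑ i ∈ J', u i := by
              linarith
            nlinarith [hθle', hEθ, hsum']
          obtain ⟨s', hs'reach, hs'0, hs'supp, hs'sum, hs'le⟩ := ih J' hJ'card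
            (fun i => u i / θ) (fun i => div_nonneg (hu i) hθpos.le) hbudget'
          set g : Fin (n+1) → ℝ := fun i => if i = j₀ then c else 0 with hg
          have h2 : ∀ i, (θ • s' + (1-θ) • g) i = θ * s' i + (1-θ) * g i := fun i => rfl
          have hgj : ∀ i, g i = if i = j₀ then c else 0 := fun i => rfl
          have hgsum : ∑ i, g i = c := by
            rw [hg]; simp
          refine ⟨θ • s' + (1-θ) • g, ?_, ?_, ?_, ?_, ?_⟩
          · rw [hKsucc]
            exact combo_mem_reach lam hs'reach hgen hθmem
          · intro i
            have h1 : 0 ≤ g i := by rw [hgj i]; split <;> [exact hc0.le; exact le_refl 0]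
            rw [h2 i]; nlinarith [hs'0 i]
          · intro i hi
            have hi' : i ∉ J' := fun h => hi (Finset.mem_of_mem_erase h)
            have hij : i ≠ j₀ := fun h => hi (h ▸ hj₀)
            have h1 : g i = 0 := by rw [hgj i, if_neg hij]
            rw [h2 i, hs'supp i hi', h1]; ring
          · rw [Finset.sum_congr rfl (fun i _ => h2 i), Finset.sum_add_distrib,
              ← Finset.mul_sum, ← Finset.mul_sum, hs'sum, hgsum]
            ring
          · intro i
            rw [h2 i]
            rcases eq_or_ne i j₀ with rfl | hij
            · have h5 : s' i = 0 := hs'supp i (Finset.notMem_erase _ _)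
              have h6 : g i = c := by rw [hgj i, if_pos rfl]
              rw [h5, h6]
              nlinarith [hθc]
            · have h5 := hs'le i
              have h3 : θ * s' i ≤ θ * (u i / θ) :=
                mul_le_mul_of_nonneg_left h5 hθpos.le
              have h4 : θ * (u i / θ) = u i := by field_simp
              have h6 : g i = 0 := by rw [hgj i, if_neg hij]
              rw [h6]
              nlinarith [h3, h4]


lemma geom_aux (α mu : ℝ) : ∀ m : ℕ, ∑ j ∈ Finset.range m, α ^ j * (1-α) * mu = (1 - α ^ m) * mu := by
  intro m; induction m with
  | zero => simp
  | succ m ih => rw [Finset.sum_range_succ, ih, pow_succ]; ring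

open scoped Pointwise in
lemma translate_avg {E : Type*} [AddCommGroup E] [Module ℝ E] (T : Set E) (hconv : Convex ℝ T)
    (mu lam : ℝ) (hl0 : 0 ≤ lam) (hl1 : lam ≤ 1) (w1 w2 : E) :
    lam • ((fun p => mu • p + w1) '' T) + (1-lam) • ((fun p => mu • p + w2) '' T)
      = (fun p => mu • p + (lam • w1 + (1-lam) • w2)) '' T := by
  ext z
  simp only [Set.mem_add, Set.mem_smul_set, Set.mem_image]
  constructor
  · rintro ⟨z1, ⟨p1, ⟨a, ha, rfl⟩, rfl⟩, z2, ⟨p2, ⟨b, hb, rfl⟩, rfl⟩, rfl⟩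
    exact ⟨lam • a + (1-lam) • b, hconv ha hb hl0 (by linarith) (by ring), by module⟩
  · rintro ⟨a, ha, rfl⟩
    exact ⟨lam • (mu • a + w1), ⟨mu • a + w1, ⟨a, ha, rfl⟩, rfl⟩,
      (1-lam) • (mu • a + w2), ⟨mu • a + w2, ⟨a, ha, rfl⟩, rfl⟩, by module⟩

end Stmt9Aux

/-- Simplex averaging density lemma: for a simplex `T` with vertices `x j`,
`α, μ ∈ (0,1)`, `λ ∈ [1/2,1)`, every translate `T' ⊆ T` of `αⁿμT` is completely
contained in some element of `𝒯_{k'}(λ;μ;T)` where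
`k' = Σ_{j=1}^{n} ⌈log(α^{j-1}(1-α)μ)/log(λ)⌉` and `𝒯₀(λ;μ;T)` consists of the
corner simplices `μT + (1-μ)x j`. -/
theorem stmt9 {n : ℕ} (x : Fin (n + 1) → EuclideanSpace ℝ (Fin n))
    (hx : AffineIndependent ℝ x)
    (T : Set (EuclideanSpace ℝ (Fin n))) (hT : T = convexHull ℝ (Set.range x))
    (α mu lam : ℝ) (hα : α ∈ Set.Ioo (0:ℝ) 1) (hmu : mu ∈ Set.Ioo (0:ℝ) 1)
    (hlam : lam ∈ Set.Ico (1/2 : ℝ) 1)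
    (k' : ℕ)
    (hk' : (k' : ℤ) = ∑ j ∈ Finset.range n, ⌈Real.log (α ^ j * (1 - α) * mu) / Real.log lam⌉)
    (v : EuclideanSpace ℝ (Fin n))
    (hsub : (fun p => (α ^ n * mu) • p + v) '' T ⊆ T) :
    ∃ S ∈ avgFamily lam
        {S0 | ∃ j : Fin (n + 1), S0 = (fun p => mu • p + (1 - mu) • x j) '' T} k',
      (fun p => (α ^ n * mu) • p + v) '' T ⊆ S := by
  classical
  obtain ⟨hα0, hα1⟩ := hα
  obtain ⟨hmu0, hmu1⟩ := hmu
  obtain ⟨hl1, hl2⟩ := hlam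
  have hl0 : (0:ℝ) < lam := by linarith
  have hconvT : Convex ℝ T := hT ▸ convex_convexHull ℝ _
  set μ'' : ℝ := α ^ n * mu with hμ''def
  have hαn1 : α ^ n ≤ 1 := pow_le_one₀ hα0.le hα1.le
  have hαn0 : (0:ℝ) < α ^ n := pow_pos hα0 n
  have hμ''0 : 0 < μ'' := mul_pos hαn0 hmu0
  have hμ''1 : μ'' < 1 := by nlinarith
  -- affine basis from the vertices
  have hcard : Fintype.card (Fin (n+1)) = Module.finrank ℝ (EuclideanSpace ℝ (Fin n)) + 1 := by
    simp [finrank_euclideanSpace_fin]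
  have htot : affineSpan ℝ (Set.range x) = ⊤ :=
    hx.affineSpan_eq_top_iff_card_eq_finrank_add_one.mpr hcard
  let b : AffineBasis (Fin (n+1)) ℝ (EuclideanSpace ℝ (Fin n)) := ⟨x, hx, htot⟩
  have hrange : Set.range ⇑b = Set.range x := rfl
  have hmemT : ∀ z, z ∈ T ↔ ∀ i, 0 ≤ b.coord i z := by
    intro z
    rw [hT, ← hrange, b.convexHull_eq_nonneg_coord]
    exact Iff.rfl
  have hxT : ∀ j, x j ∈ T := fun j => hT ▸ subset_convexHull ℝ _ ⟨j, rfl⟩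
  have hP : ∀ j, μ'' • x j + v ∈ T := fun j => hsub ⟨x j, hxT j, rfl⟩
  have hcoord_aff : ∀ (i : Fin (n+1)) (w z : EuclideanSpace ℝ (Fin n)),
      b.coord i (w + z) = (b.coord i).linear w + b.coord i z := by
    intro i w z
    have h := (b.coord i).map_vadd z w
    simpa [vadd_eq_add] using h
  have hcoordb : ∀ i j : Fin (n+1), b.coord i (x j) = if i = j then 1 else 0 :=
    fun i j => b.coord_apply i j
  set P0 : EuclideanSpace ℝ (Fin n) := μ'' • x 0 + v with hP0def
  have ht0 : ∀ i, 0 ≤ b.coord i P0 := (hmemT _).mp (hP 0)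
  have htsum : ∑ i, b.coord i P0 = 1 := b.sum_coord_apply_eq_one _
  have hrepr : P0 = ∑ i, b.coord i P0 • x i :=
    (b.linear_combination_coord_eq_self P0).symm
  set u : Fin (n+1) → ℝ := fun i => if i = 0 then b.coord 0 P0 - μ'' else b.coord i P0
    with hudef
  have huval : ∀ i, u i = b.coord i P0 + (if i = 0 then -μ'' else 0) := by
    intro i; rw [hudef]; dsimp only; split
    · rename_i h; rw [h]; ring
    · ring
  have husum : ∑ i, u i = 1 - μ'' := by
    rw [Finset.sum_congr rfl (fun i _ => huval i), Finset.sum_add_distrib, htsum]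
    simp only [Finset.sum_ite_eq', Finset.mem_univ, if_true]
    ring
  have huv : ∑ i, u i • x i = v := by
    have h1 : ∀ i, u i • x i = b.coord i P0 • x i
        + (if i = 0 then -(μ'' • x 0) else 0) := by
      intro i; rw [huval i, add_smul]
      congr 1
      split
      · rename_i h; rw [h, neg_smul]
      · rw [zero_smul]
    rw [Finset.sum_congr rfl (fun i _ => h1 i), Finset.sum_add_distrib, ← hrepr]
    rw [Finset.sum_ite_eq' Finset.univ (0 : Fin (n+1)) (fun _ => -(μ'' • x 0))]
    simp only [Finset.mem_univ, if_true]
    rw [hP0def]; abel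
  have hu0 : ∀ i, 0 ≤ u i := by
    intro i
    rw [hudef]; dsimp only; split
    · -- need μ'' ≤ coord 0 P0
      rcases Nat.eq_zero_or_pos n with hn | hn
      · -- n = 0 : single coordinate equal to 1
        subst hn
        have h1 : b.coord 0 P0 = 1 := by
          have h2 := htsum
          rw [show (Finset.univ : Finset (Fin 1)) = {0} from rfl, Finset.sum_singleton] at h2
          exact h2
        rw [h1]; linarith
      · set j1 : Fin (n+1) := ⟨1, by omega⟩ with hj1def
        have hj1 : (0 : Fin (n+1)) ≠ j1 := by
          rw [hj1def]; intro h; simpa [Fin.ext_iff] using h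
        have hL : ∀ w, (b.coord 0).linear w = b.coord 0 w - b.coord 0 0 := by
          intro w; have h := hcoord_aff 0 w 0; rw [add_zero] at h; linarith
        have hsm : ∀ (j : Fin (n+1)), b.coord 0 (μ'' • x j + v)
            = μ'' * ((b.coord 0) (x j) - b.coord 0 0) + b.coord 0 v := by
          intro j
          rw [hcoord_aff 0 (μ'' • x j) v, LinearMap.map_smul, hL (x j)]
          simp [smul_eq_mul]
        have h00 : b.coord 0 (x 0) = 1 := by rw [hcoordb 0 0]; simp
        have h01 : b.coord 0 (x j1) = 0 := by rw [hcoordb 0 j1]; simp [hj1]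
        have hge : 0 ≤ b.coord 0 (μ'' • x j1 + v) := (hmemT _).mp (hP j1) 0
        have hv0 := hsm 0
        have hv1 := hsm j1
        rw [h00] at hv0; rw [h01] at hv1
        have hdiff : b.coord 0 (μ'' • x 0 + v) - b.coord 0 (μ'' • x j1 + v) = μ'' := by
          rw [hv0, hv1]; ring
        rw [hP0def]
        linarith [hge, hdiff]
    · exact ht0 i
  -- the slack sequence and step counts
  set ε : ℕ → ℝ := fun j => α ^ j * (1 - α) * mu with hεdef
  set kk : ℕ → ℕ := fun j => (⌈Real.log (ε j) / Real.log lam⌉).toNat with hkkdef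
  have hε0 : ∀ j, 0 < ε j := fun j => by
    rw [hεdef]; exact mul_pos (mul_pos (pow_pos hα0 j) (by linarith)) hmu0
  have hε1 : ∀ j, ε j < 1 := fun j => by
    rw [hεdef]; dsimp only
    have h1 : α ^ j ≤ 1 := pow_le_one₀ hα0.le hα1.le
    have h2 : α ^ j * (1 - α) ≤ 1 - α := by nlinarith [pow_pos hα0 j]
    have h3 : α ^ j * (1 - α) * mu ≤ (1 - α) * mu := by nlinarith [pow_pos hα0 j]
    nlinarith
  have hloglam : Real.log lam < 0 := Real.log_neg hl0 hl2
  have hratio : ∀ j, 0 ≤ Real.log (ε j) / Real.log lam := fun j =>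
    le_of_lt (div_pos_of_neg_of_neg (Real.log_neg (hε0 j) (hε1 j)) hloglam)
  have hkk : ∀ j, lam ^ kk j ≤ ε j := by
    intro j
    have h1 : Real.log (ε j) / Real.log lam ≤ (kk j : ℝ) := by
      rw [hkkdef]; dsimp only
      have h2 := Int.le_ceil (Real.log (ε j) / Real.log lam)
      have h3 : ((⌈Real.log (ε j) / Real.log lam⌉.toNat : ℕ) : ℝ)
          = ((⌈Real.log (ε j) / Real.log lam⌉ : ℤ) : ℝ) := by
        exact_mod_cast congrArg (fun z : ℤ => (z : ℝ))
          (Int.toNat_of_nonneg (Int.ceil_nonneg (hratio j)))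
      rw [h3]; exact h2
    have h4 : (kk j : ℝ) * Real.log lam ≤ Real.log (ε j) :=
      (div_le_iff_of_neg hloglam).mp h1
    have h5 : Real.log (lam ^ kk j) ≤ Real.log (ε j) := by
      rw [Real.log_pow]; exact h4
    exact (Real.log_le_log_iff (pow_pos hl0 _) (hε0 j)).mp h5
  have hk'eq : k' = ∑ j ∈ Finset.range n, kk j := by
    have h1 : (k' : ℤ) = ∑ j ∈ Finset.range n, ((kk j : ℕ) : ℤ) := by
      rw [hk']
      refine Finset.sum_congr rfl fun j _ => ?_
      rw [hkkdef]; dsimp only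
      exact (Int.toNat_of_nonneg (Int.ceil_nonneg (hratio j))).symm
    exact_mod_cast h1
  -- budget for the Stmt9Aux.key lemma
  have hbudget : (1 - mu) + ∑ j ∈ Finset.range n, ε j ≤ ∑ i ∈ Finset.univ, u i := by
    have hgeom : ∑ j ∈ Finset.range n, ε j = (1 - α ^ n) * mu := by
      rw [hεdef]; exact Stmt9Aux.geom_aux α mu n
    have h2 : ∑ i ∈ Finset.univ, u i = 1 - μ'' := husum
    have h3 : (1:ℝ) - mu + (1 - α ^ n) * mu = 1 - α ^ n * mu := by ring
    rw [hgeom, h2, hμ''def]; linarith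
  obtain ⟨s, hsreach, hs0, hssupp, hssum, hsle⟩ :=
    Stmt9Aux.key (n := n) (c := 1 - mu) hl1 hl2 (by linarith) (by linarith) ε kk hε0 hkk n
      Finset.univ (by simp) u hu0 hbudget
  rw [hk'eq]
  -- transfer reachability of coefficient vectors to the averaged families of sets
  have hmain : ∀ (k : ℕ) (r : Fin (n+1) → ℝ),
      r ∈ Stmt9Aux.reach lam {w : Fin (n+1) → ℝ | ∃ j, w = fun i => if i = j then 1 - mu else 0} k →
      ((fun p => mu • p + ∑ i, r i • x i) '' T) ∈ avgFamily lam
        {S0 | ∃ j : Fin (n + 1), S0 = (fun p => mu • p + (1 - mu) • x j) '' T} k := by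
    intro k
    induction k with
    | zero =>
      rintro r ⟨j, rfl⟩
      refine ⟨j, ?_⟩
      have h1 : (∑ i, (if i = j then (1 - mu : ℝ) else 0) • x i) = (1 - mu) • x j := by
        have h2 : ∀ i, (if i = j then (1 - mu : ℝ) else 0) • x i
            = if i = j then (1 - mu) • x i else 0 := by
          intro i; split <;> simp
        rw [Finset.sum_congr rfl (fun i _ => h2 i),
          Finset.sum_ite_eq' Finset.univ j (fun i => (1 - mu : ℝ) • x i)]
        simp
      rw [h1]
    | succ k ih =>
      rintro r ⟨r1, hr1, r2, hr2, rfl⟩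
      refine ⟨_, ih r1 hr1, _, ih r2 hr2, ?_⟩
      rw [Stmt9Aux.translate_avg T hconvT mu lam hl0.le hl2.le (∑ i, r1 i • x i) (∑ i, r2 i • x i)]
      have h1 : ∑ i, ((lam • r1 + (1-lam) • r2) i) • x i
          = lam • (∑ i, r1 i • x i) + (1-lam) • (∑ i, r2 i • x i) := by
        rw [Finset.smul_sum, Finset.smul_sum, ← Finset.sum_add_distrib]
        refine Finset.sum_congr rfl fun i _ => ?_
        have h2 : (lam • r1 + (1-lam) • r2) i = lam * r1 i + (1-lam) * r2 i := rfl
        rw [h2]; module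
      rw [h1]
  refine ⟨(fun p => mu • p + ∑ i, s i • x i) '' T, hmain _ s hsreach, ?_⟩
  rintro z ⟨q, hq, rfl⟩
  have htq0 : ∀ i, 0 ≤ b.coord i q := (hmemT q).mp hq
  have htqsum : ∑ i, b.coord i q = 1 := b.sum_coord_apply_eq_one q
  have hqrepr : q = ∑ i, b.coord i q • x i := (b.linear_combination_coord_eq_self q).symm
  set r : Fin (n+1) → ℝ := fun i => (μ'' * b.coord i q + u i - s i) / mu with hrdef
  have hr0 : ∀ i ∈ Finset.univ, 0 ≤ r i := by
    intro i _
    rw [hrdef]; dsimp only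
    apply div_nonneg _ hmu0.le
    have := hsle i
    nlinarith [htq0 i, hμ''0]
  have hrsum : ∑ i ∈ Finset.univ, r i = 1 := by
    rw [hrdef]; dsimp only
    rw [← Finset.sum_div]
    have h1 : ∑ i, (μ'' * b.coord i q + u i - s i) = mu := by
      rw [Finset.sum_sub_distrib, Finset.sum_add_distrib, ← Finset.mul_sum,
        htqsum, husum, hssum]
      ring
    rw [h1, div_self (ne_of_gt hmu0)]
  have hpT : (∑ i, r i • x i) ∈ T := by
    rw [hT]
    have h := affineCombination_mem_convexHull (s := Finset.univ) (v := x) (w := r) hr0 hrsum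
    rwa [Finset.affineCombination_eq_linear_combination _ _ _ hrsum] at h
  refine ⟨∑ i, r i • x i, hpT, ?_⟩
  show mu • (∑ i, r i • x i) + ∑ i, s i • x i = μ'' • q + v
  have hmul : ∀ i, mu • (r i • x i) = (μ'' * b.coord i q + u i - s i) • x i := by
    intro i; rw [smul_smul, hrdef]; dsimp only
    congr 1; field_simp
  calc mu • (∑ i, r i • x i) + ∑ i, s i • x i
      = (∑ i, (μ'' * b.coord i q + u i - s i) • x i) + ∑ i, s i • x i := by
        rw [Finset.smul_sum, Finset.sum_congr rfl (fun i _ => hmul i)]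
    _ = ∑ i, (μ'' * b.coord i q + u i) • x i := by
        rw [← Finset.sum_add_distrib]
        exact Finset.sum_congr rfl fun i _ => by module
    _ = μ'' • (∑ i, b.coord i q • x i) + ∑ i, u i • x i := by
        rw [Finset.smul_sum, ← Finset.sum_add_distrib]
        exact Finset.sum_congr rfl fun i _ => by module
    _ = μ'' • q + v := by rw [← hqrepr, huv]
end

section
/- For every convex polytope P ⊆ ℝⁿ there exists a point o ∈ P (taken as origin) with the property: for any b ∈ (0,1) there exists ε > 0 (depending on n, τ, b) such that for any measurable A ⊆ P, any τ ∈ (0,1/2], and any t ∈ [τ, 1−τ], if |P \ A| ≤ ε|P| then (1−b)P ⊆ tA + (1−t)A. -/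
open MeasureTheory Set
open scoped ENNReal Pointwise

/-- For every convex polytope `P ⊆ ℝⁿ` (of positive volume) there is a point `o ∈ P`
such that: for any `b ∈ (0,1)` and `τ ∈ (0,1/2]` there exists `ε > 0` such that for any
measurable `A ⊆ P` and `t ∈ [τ,1-τ]`, if `|P \ A| ≤ ε|P|` then the scaling of `P` by
factor `1-b` about `o` is contained in `tA + (1-t)A`. -/
theorem stmt11 {n : ℕ} (V : Finset (EuclideanSpace ℝ (Fin n)))
    (P : Set (EuclideanSpace ℝ (Fin n)))
    (hP : P = convexHull ℝ (V : Set (EuclideanSpace ℝ (Fin n))))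
    (hPvol : 0 < volume P) :
    ∃ o ∈ P, ∀ b ∈ Set.Ioo (0:ℝ) 1, ∀ τ ∈ Set.Ioc (0:ℝ) (1/2), ∃ ε : ℝ, 0 < ε ∧
      ∀ A : Set (EuclideanSpace ℝ (Fin n)), A ⊆ P → MeasurableSet A →
        ∀ t ∈ Set.Icc τ (1 - τ),
          volume (P \ A) ≤ ENNReal.ofReal ε * volume P →
          (fun p => (1 - b) • (p - o) + o) '' P ⊆ t • A + (1 - t) • A := by
  classical
  have key : ∀ Bt Ct : ℝ, 0 < Bt → 0 ≤ Ct → Bt / (2 * (Ct + 1)) * Ct < Bt := by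
    intro Bt Ct hBt hCt
    rw [div_mul_eq_mul_div, div_lt_iff₀ (by positivity)]
    nlinarith
  have hconv : Convex ℝ P := hP ▸ convex_convexHull ℝ _
  have hcpt : IsCompact P := by rw [hP]; exact V.finite_toSet.isCompact_convexHull ℝ
  have hPfin : volume P < ⊤ := hcpt.measure_lt_top
  -- interior of P is nonempty
  have hint : (interior P).Nonempty := by
    by_contra h
    rw [Set.not_nonempty_iff_eq_empty] at h
    have hspan : affineSpan ℝ P ≠ ⊤ := by
      intro htop
      rw [← hconv.interior_nonempty_iff_affineSpan_eq_top] at htop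
      rw [h] at htop
      exact Set.not_nonempty_empty htop
    have h0 : volume P = 0 :=
      measure_mono_null (subset_affineSpan ℝ P)
        (MeasureTheory.Measure.addHaar_affineSubspace volume _ hspan)
    exact hPvol.ne' h0
  obtain ⟨o, ho⟩ := hint
  obtain ⟨r, hr, hballo⟩ := Metric.isOpen_iff.1 isOpen_interior o ho
  have hballP : Metric.ball o r ⊆ P := hballo.trans interior_subset
  refine ⟨o, interior_subset ho, ?_⟩
  intro b hb τ hτ
  obtain ⟨hb0, hb1⟩ := hb
  have hτ0 : (0:ℝ) < τ := hτ.1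
  have hτh : τ ≤ 1/2 := hτ.2
  have hτ1 : τ < 1 := by linarith
  set d := Module.finrank ℝ (EuclideanSpace ℝ (Fin n)) with hd
  set c : ℝ := (1 - τ) / τ with hc
  have hc1 : 1 ≤ c := by
    rw [hc, le_div_iff₀ hτ0]; linarith
  have hc0 : 0 < c := lt_of_lt_of_le one_pos hc1
  set ρ : ℝ := b * r / c with hρdef
  have hρ0 : 0 < ρ := by positivity
  have hρbr : c * ρ = b * r := by
    rw [hρdef]; field_simp
  have hρle : ρ ≤ b * r := by
    rw [hρdef, div_le_iff₀ hc0]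
    nlinarith [mul_pos hb0 hr]
  set B : ℝ≥0∞ := volume (Metric.ball (0 : EuclideanSpace ℝ (Fin n)) ρ) with hB
  have hB0 : 0 < B := Metric.measure_ball_pos _ _ hρ0
  have hBfin : B < ⊤ := measure_ball_lt_top
  set C : ℝ≥0∞ := volume P * (1 + ENNReal.ofReal (c ^ d)) with hC
  have hCfin : C ≠ ⊤ := by
    rw [hC]
    exact ENNReal.mul_ne_top hPfin.ne (by simp)
  set ε : ℝ := B.toReal / (2 * (C.toReal + 1)) with hεdef
  have hBt0 : 0 < B.toReal := ENNReal.toReal_pos hB0.ne' hBfin.ne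
  have hCt0 : 0 ≤ C.toReal := ENNReal.toReal_nonneg
  have hε0 : 0 < ε := by positivity
  clear_value d c ρ B C ε
  refine ⟨ε, hε0, ?_⟩
  intro A hAP _hAmeas t ht hvol
  obtain ⟨ht1, ht2⟩ := ht
  have h0t : 0 < t := lt_of_lt_of_le hτ0 ht1
  have h1t : 0 < 1 - t := by linarith
  rintro x ⟨p, hp, rfl⟩
  set x : EuclideanSpace ℝ (Fin n) := (1 - b) • (p - o) + o with hxdef
  show x ∈ t • A + (1 - t) • A
  -- the ball of radius b*r around x is inside P
  have hballx : Metric.ball x (b * r) ⊆ P := by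
    intro z hz
    have hzx : ‖z - x‖ < b * r := by
      rw [Metric.mem_ball, dist_eq_norm] at hz; exact hz
    set q : EuclideanSpace ℝ (Fin n) := o + b⁻¹ • (z - x) with hq
    have hqP : q ∈ P := by
      apply hballP
      rw [Metric.mem_ball, dist_eq_norm]
      have : q - o = b⁻¹ • (z - x) := by rw [hq]; abel
      rw [this, norm_smul, norm_inv, Real.norm_eq_abs, abs_of_pos hb0]
      rw [inv_mul_lt_iff₀ hb0]
      exact hzx
    have hz' : (1 - b) • p + b • q = z := by
      have hbb : b • (b⁻¹ • (z - x)) = z - x := smul_inv_smul₀ hb0.ne' _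
      rw [hq, smul_add, hbb, hxdef]
      module
    rw [← hz']
    exact hconv hp hqP (by linarith) hb0.le (by ring)
  -- the map φ
  set φ : EuclideanSpace ℝ (Fin n) → EuclideanSpace ℝ (Fin n) := fun y => (1 - t)⁻¹ • (x - t • y) with hφ
  have hH : (1 - t) * (t / (1 - t)) = t := by field_simp
  have hφx : ∀ y, φ y - x = (t / (1 - t)) • (x - y) := by
    intro y
    apply smul_right_injective _ h1t.ne'
    show (1 - t) • (φ y - x) = (1 - t) • ((t / (1 - t)) • (x - y))
    simp only [hφ]
    rw [smul_sub, smul_inv_smul₀ h1t.ne', smul_smul, hH]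
    module
  -- points of the small ball and their φ-images lie in P
  have hQ : ∀ y ∈ Metric.ball x ρ, y ∈ P ∧ φ y ∈ P := by
    intro y hy
    have hyx : ‖y - x‖ < ρ := by rw [Metric.mem_ball, dist_eq_norm] at hy; exact hy
    have hyx0 : 0 ≤ ‖y - x‖ := norm_nonneg _
    constructor
    · exact hballx (by rw [Metric.mem_ball, dist_eq_norm]; exact lt_of_lt_of_le hyx hρle)
    · apply hballx
      rw [Metric.mem_ball, dist_eq_norm, hφx y]
      rw [norm_smul, Real.norm_eq_abs, abs_of_pos (by positivity : (0:ℝ) < t / (1 - t))]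
      have hkc : t / (1 - t) ≤ c := by
        rw [hc, div_le_div_iff₀ h1t hτ0]
        nlinarith
      have hnorm : ‖x - y‖ < ρ := by rwa [norm_sub_rev]
      calc t / (1 - t) * ‖x - y‖ ≤ c * ‖x - y‖ := by
              apply mul_le_mul_of_nonneg_right hkc (norm_nonneg _)
        _ < c * ρ := by exact mul_lt_mul_of_pos_left hnorm hc0
        _ = b * r := hρbr
  -- volume of φ-preimages
  have hpre : ∀ S : Set (EuclideanSpace ℝ (Fin n)), volume (φ ⁻¹' S) ≤ ENNReal.ofReal (c ^ d) * volume S := by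
    intro S
    set k : ℝ := t / (1 - t) with hk
    have hk0 : 0 < k := by positivity
    set w : EuclideanSpace ℝ (Fin n) := (1 - t)⁻¹ • x with hw
    have hφeq : φ ⁻¹' S = ((-k) • ·) ⁻¹' ((w + ·) ⁻¹' S) := by
      ext y
      simp only [Set.mem_preimage]
      have hky : φ y = w + (-k) • y := by
        simp only [hφ, hw, hk]
        module
      rw [hky]
    rw [hφeq, MeasureTheory.Measure.addHaar_preimage_smul volume (by simp [hk0.ne'] : (-k) ≠ 0),
      measure_preimage_add, ← hd]
    apply mul_le_mul_left
    apply ENNReal.ofReal_le_ofReal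
    have h1 : |((-k) ^ d)⁻¹| = (k⁻¹) ^ d := by
      rw [abs_inv, abs_pow, abs_neg, abs_of_pos hk0, inv_pow]
    rw [h1]
    apply pow_le_pow_left₀ (by positivity)
    rw [hk, inv_div, hc, div_le_div_iff₀ h0t hτ0]
    nlinarith
  -- the good set is nonempty
  have hgood : (Metric.ball x ρ ∩ A ∩ φ ⁻¹' A).Nonempty := by
    by_contra hempty
    rw [Set.not_nonempty_iff_eq_empty] at hempty
    have hcover : Metric.ball x ρ ⊆ (P \ A) ∪ φ ⁻¹' (P \ A) := by
      intro y hy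
      obtain ⟨hyP, hφyP⟩ := hQ y hy
      by_cases hyA : y ∈ A
      · by_cases hφyA : φ y ∈ A
        · exfalso
          have : y ∈ Metric.ball x ρ ∩ A ∩ φ ⁻¹' A := ⟨⟨hy, hyA⟩, hφyA⟩
          rw [hempty] at this
          exact this
        · exact Or.inr ⟨hφyP, hφyA⟩
      · exact Or.inl ⟨hyP, hyA⟩
    have hle : B ≤ ENNReal.ofReal ε * C := by
      have h1 : B = volume (Metric.ball x ρ) := by
        rw [hB]; exact (MeasureTheory.Measure.addHaar_ball_center volume x ρ).symm
      calc B ≤ volume (P \ A) + volume (φ ⁻¹' (P \ A)) := by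
              rw [h1]; exact le_trans (measure_mono hcover) (measure_union_le _ _)
        _ ≤ ENNReal.ofReal ε * volume P
              + ENNReal.ofReal (c ^ d) * (ENNReal.ofReal ε * volume P) := by
              apply add_le_add hvol
              exact le_trans (hpre (P \ A)) (mul_le_mul_right hvol _)
        _ = ENNReal.ofReal ε * C := by
              rw [hC]
              generalize volume P = vP
              generalize ENNReal.ofReal (c ^ d) = X
              generalize ENNReal.ofReal ε = e
              ring
    have hlt : ENNReal.ofReal ε * C < B := by
      have hCeq : C = ENNReal.ofReal C.toReal := (ENNReal.ofReal_toReal hCfin).symm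
      have hBeq : B = ENNReal.ofReal B.toReal := (ENNReal.ofReal_toReal hBfin.ne).symm
      calc ENNReal.ofReal ε * C = ENNReal.ofReal (ε * C.toReal) := by
            conv_lhs => rw [hCeq]
            rw [← ENNReal.ofReal_mul hε0.le]
        _ < ENNReal.ofReal B.toReal := by
            rw [ENNReal.ofReal_lt_ofReal_iff hBt0, hεdef]
            exact key _ _ hBt0 hCt0
        _ = B := hBeq.symm
    exact absurd hle (not_le.2 hlt)
  obtain ⟨y, ⟨_, hyA⟩, hφyA⟩ := hgood
  have hxeq : x = t • y + (1 - t) • φ y := by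
    simp only [hφ, smul_smul, mul_inv_cancel₀ h1t.ne', one_smul]
    abel
  rw [hxeq]
  exact Set.add_mem_add (smul_mem_smul_set hyA) (smul_mem_smul_set hφyA)
end

section
/- Sharpness example for the exponents: let n ≥ 2, τ ∈ (0,1/2], t = τ, λ > 0, and A = ({(0,0)} ∪ [λ, 1+λ] × [0,1]) × [0,1]^{n−2} ⊆ ℝⁿ. Then |co(A) \ A| = λ/2 and δ(A;t) = |(tA + (1−t)A) \ A| = τλ(2 − 3τ) (for λ sufficiently small). -/
open MeasureTheory Set
open scoped ENNReal Pointwise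

/-- product-form sets -/
def PF {n : ℕ} (i0 i1 : Fin n) (T : Set (ℝ × ℝ)) : Set (Fin n → ℝ) :=
  {y | (y i0, y i1) ∈ T ∧ ∀ i : Fin n, 2 ≤ (i : ℕ) → y i ∈ Set.Icc (0:ℝ) 1}

lemma PF_diff {n : ℕ} (i0 i1 : Fin n) (T1 T2 : Set (ℝ × ℝ)) :
    PF i0 i1 T1 \ PF i0 i1 T2 = PF i0 i1 (T1 \ T2) := by
  ext y; simp only [PF, Set.mem_diff, Set.mem_setOf_eq]; tauto

lemma PF_convex {n : ℕ} (i0 i1 : Fin n) (T : Set (ℝ × ℝ)) (hT : Convex ℝ T) :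
    Convex ℝ (PF i0 i1 T) := by
  rintro x ⟨hx1, hx2⟩ y ⟨hy1, hy2⟩ a b ha hb hab
  constructor
  · have := hT hx1 hy1 ha hb hab
    simpa [Prod.smul_mk, Prod.mk_add_mk, smul_eq_mul] using this
  · intro i hi
    have h1 := hx2 i hi
    have h2 := hy2 i hi
    simp only [Pi.add_apply, Pi.smul_apply, smul_eq_mul, Set.mem_Icc] at *
    constructor
    · nlinarith [h1.1, h2.1]
    · nlinarith [h1.2, h2.2]

def R2 (lam : ℝ) : Set (ℝ × ℝ) := Set.Icc lam (1+lam) ×ˢ Set.Icc (0:ℝ) 1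
def S2 (lam : ℝ) : Set (ℝ × ℝ) := {(0:ℝ×ℝ)} ∪ R2 lam
def Hull2 (lam : ℝ) : Set (ℝ × ℝ) :=
  {p : ℝ × ℝ | 0 ≤ p.1 ∧ p.1 ≤ 1+lam ∧ 0 ≤ p.2 ∧ p.2 ≤ 1 ∧ lam * p.2 ≤ p.1}

lemma hull2_convex (lam : ℝ) : Convex ℝ (Hull2 lam) := by
  rintro p ⟨h1, h2, h3, h4, h5⟩ q ⟨g1, g2, g3, g4, g5⟩ a b ha hb hab
  simp only [Hull2, Set.mem_setOf_eq, Prod.fst_add, Prod.snd_add, Prod.smul_fst, Prod.smul_snd,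
    smul_eq_mul]
  refine ⟨by nlinarith, by nlinarith, by nlinarith, by nlinarith, by nlinarith⟩

lemma PF_mono {n : ℕ} (i0 i1 : Fin n) {T1 T2 : Set (ℝ × ℝ)} (h : T1 ⊆ T2) :
    PF i0 i1 T1 ⊆ PF i0 i1 T2 := fun y hy => ⟨h hy.1, hy.2⟩

lemma S2_subset_Hull2 (lam : ℝ) (hlam : 0 < lam) : S2 lam ⊆ Hull2 lam := by
  rintro p (hp | hp)
  · simp only [Set.mem_singleton_iff] at hp
    subst hp
    refine ⟨le_refl _, by norm_num; linarith, le_refl _, by norm_num, by norm_num⟩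
  · obtain ⟨⟨ha1, ha2⟩, hb1, hb2⟩ := hp
    exact ⟨by linarith, ha2, hb1, hb2, by nlinarith⟩

lemma hull_eq {n : ℕ} (i0 i1 : Fin n) (hi0 : (i0:ℕ) = 0) (hi1 : (i1:ℕ) = 1)
    (lam : ℝ) (hlam : 0 < lam) :
    convexHull ℝ (PF i0 i1 (S2 lam)) = PF i0 i1 (Hull2 lam) := by
  have h01 : i0 ≠ i1 := fun h => by rw [h, hi1] at hi0; omega
  apply Subset.antisymm
  · exact convexHull_min (PF_mono _ _ (S2_subset_Hull2 lam hlam))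
      (PF_convex _ _ _ (hull2_convex lam))
  · rintro y ⟨⟨h1, h2, h3, h4, h5⟩, htail⟩
    by_cases hcase : lam ≤ y i0
    · exact subset_convexHull ℝ _ ⟨Or.inr ⟨⟨hcase, h2⟩, h3, h4⟩, htail⟩
    push_neg at hcase
    rcases eq_or_lt_of_le h1 with h10 | h10
    · -- y i0 = 0, hence y i1 = 0
      have hy1 : y i1 = 0 := by nlinarith
      exact subset_convexHull ℝ _ ⟨Or.inl (by simp [Prod.ext_iff, hy1]; exact h10.symm), htail⟩
    · -- 0 < y i0 < lam
      classical
      set u : Fin n → ℝ := fun i => if (i:ℕ) < 2 then 0 else y i with hu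
      set v : Fin n → ℝ := fun i =>
        if i = i0 then lam else if i = i1 then lam * y i1 / y i0 else y i with hv
      have hui0 : u i0 = 0 := by simp [hu, hi0]
      have hui1 : u i1 = 0 := by simp [hu, hi1]
      have hvi0 : v i0 = lam := by simp [hv]
      have hvi1 : v i1 = lam * y i1 / y i0 := by simp [hv, h01.symm]
      have humem : u ∈ PF i0 i1 (S2 lam) := by
        refine ⟨Or.inl (by simp [Prod.ext_iff, hui0, hui1]), fun i hi => ?_⟩
        have : ¬ ((i:ℕ) < 2) := by omega
        simp only [hu, if_neg this]
        exact htail i hi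
      have hvmem : v ∈ PF i0 i1 (S2 lam) := by
        refine ⟨Or.inr ⟨⟨?_, ?_⟩, ?_, ?_⟩, fun i hi => ?_⟩
        · rw [hvi0]
        · rw [hvi0]; linarith
        · rw [hvi1]; positivity
        · rw [hvi1, div_le_one h10]; nlinarith
        · have hne0 : i ≠ i0 := fun h => by rw [h, hi0] at hi; omega
          have hne1 : i ≠ i1 := fun h => by rw [h, hi1] at hi; omega
          simp only [hv, if_neg hne0, if_neg hne1]
          exact htail i hi
      set c : ℝ := y i0 / lam with hc
      have hc0 : 0 ≤ c := by positivity
      have hc1 : c < 1 := by rw [hc, div_lt_one hlam]; exact hcase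
      refine segment_subset_convexHull humem hvmem ⟨1 - c, c, by linarith, hc0, by ring, ?_⟩
      funext i
      simp only [Pi.add_apply, Pi.smul_apply, smul_eq_mul]
      by_cases hcase0 : i = i0
      · subst hcase0
        rw [hui0, hvi0, hc]
        field_simp
        ring
      by_cases hcase1 : i = i1
      · subst hcase1
        rw [hui1, hvi1, hc]
        field_simp
        ring
      · have hn0 : ¬ ((i:ℕ) < 2) := by
          rcases Nat.lt_or_ge (i:ℕ) 2 with h | h
          · interval_cases hval : (i:ℕ)
            · exact absurd (Fin.ext (by rw [hval, hi0])) hcase0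
            · exact absurd (Fin.ext (by rw [hval, hi1])) hcase1
          · omega
        simp only [hu, hv, if_neg hn0, if_neg hcase0, if_neg hcase1]
        ring

def D2 (τ lam : ℝ) : Set (ℝ × ℝ) :=
  S2 lam ∪ Set.Icc (τ*lam) (τ*(1+lam)) ×ˢ Set.Icc (0:ℝ) τ
    ∪ Set.Icc ((1-τ)*lam) ((1-τ)*(1+lam)) ×ˢ Set.Icc (0:ℝ) (1-τ)

lemma mink_eq {n : ℕ} (i0 i1 : Fin n) (hi0 : (i0:ℕ) = 0) (hi1 : (i1:ℕ) = 1)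
    (τ lam : ℝ) (hτ0 : 0 < τ) (hτ1 : τ < 1) (hlam : 0 < lam) :
    τ • PF i0 i1 (S2 lam) + (1-τ) • PF i0 i1 (S2 lam) = PF i0 i1 (D2 τ lam) := by
  classical
  have h01 : i0 ≠ i1 := fun h => by rw [h, hi1] at hi0; omega
  have hfin2 : ∀ i : Fin n, (i:ℕ) < 2 → i = i0 ∨ i = i1 := by
    intro i hi
    interval_cases hval : (i:ℕ)
    · exact Or.inl (Fin.ext (by rw [hval, hi0]))
    · exact Or.inr (Fin.ext (by rw [hval, hi1]))
  ext y
  constructor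
  · intro hy
    rw [Set.mem_add] at hy
    obtain ⟨a, ha, b, hb, rfl⟩ := hy
    obtain ⟨u, hu, rfl⟩ := ha
    obtain ⟨v, hv, rfl⟩ := hb
    obtain ⟨hu1, hu2⟩ := hu
    obtain ⟨hv1, hv2⟩ := hv
    have heval : ∀ i, (τ • u + (1-τ) • v) i = τ * u i + (1-τ) * v i := by
      intro i; simp [Pi.add_apply, smul_eq_mul]
    refine ⟨?_, fun i hi => ?_⟩
    · simp only [S2, R2, Set.mem_union, Set.mem_singleton_iff, Prod.ext_iff, Prod.fst_zero,
        Prod.snd_zero, Set.mem_prod, Set.mem_Icc] at hu1 hv1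
      simp only [D2, S2, R2, Set.mem_union, Set.mem_singleton_iff, Prod.ext_iff, Prod.fst_zero,
        Prod.snd_zero, Set.mem_prod, Set.mem_Icc, heval]
      rcases hu1 with ⟨e0, e1⟩ | ⟨⟨a1, a2⟩, b1, b2⟩ <;>
        rcases hv1 with ⟨f0, f1⟩ | ⟨⟨c1, c2⟩, d1, d2⟩
      · left; left; left
        rw [e0, e1, f0, f1]
        constructor <;> ring
      · right
        rw [e0, e1]
        refine ⟨⟨by nlinarith, by nlinarith⟩, by nlinarith, by nlinarith⟩
      · left; right
        rw [f0, f1]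
        refine ⟨⟨by nlinarith, by nlinarith⟩, by nlinarith, by nlinarith⟩
      · left; left; right
        refine ⟨⟨by nlinarith, by nlinarith⟩, by nlinarith, by nlinarith⟩
    · obtain ⟨e1, e2⟩ := hu2 i hi
      obtain ⟨f1, f2⟩ := hv2 i hi
      rw [heval]
      exact ⟨by nlinarith, by nlinarith⟩
  · rintro ⟨hhead, htail⟩
    set z : Fin n → ℝ := fun i => if (i:ℕ) < 2 then 0 else y i with hz
    have hzmem : z ∈ PF i0 i1 (S2 lam) := by
      refine ⟨Or.inl (by simp [hz, Prod.ext_iff, hi0, hi1]), fun i hi => ?_⟩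
      have : ¬ ((i:ℕ) < 2) := by omega
      simp only [hz, if_neg this]
      exact htail i hi
    rw [Set.mem_add]
    rcases hhead with (hS | hT) | hT'
    · rcases hS with h0 | hR
      · -- y head = 0
        simp only [Set.mem_singleton_iff, Prod.ext_iff, Prod.fst_zero, Prod.snd_zero] at h0
        refine ⟨τ • z, smul_mem_smul_set hzmem, (1-τ) • z, smul_mem_smul_set hzmem, ?_⟩
        funext i
        simp only [Pi.add_apply, Pi.smul_apply, smul_eq_mul, hz]
        by_cases hlt : (i:ℕ) < 2
        · rw [if_pos hlt]
          rcases hfin2 i hlt with rfl | rfl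
          · rw [h0.1]; ring
          · rw [h0.2]; ring
        · rw [if_neg hlt]; ring
      · -- y head in R2
        have hymem : y ∈ PF i0 i1 (S2 lam) := ⟨Or.inr hR, htail⟩
        refine ⟨τ • y, smul_mem_smul_set hymem, (1-τ) • y, smul_mem_smul_set hymem, ?_⟩
        funext i
        simp only [Pi.add_apply, Pi.smul_apply, smul_eq_mul]
        ring
    · -- τ piece
      simp only [Set.mem_prod, Set.mem_Icc] at hT
      obtain ⟨⟨a1, a2⟩, b1, b2⟩ := hT
      set u : Fin n → ℝ := fun i => if i = i0 then y i0 / τ else if i = i1 then y i1 / τ else y i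
        with hu
      have hui0 : u i0 = y i0 / τ := by rw [hu]; simp
      have hui1 : u i1 = y i1 / τ := by rw [hu]; simp [h01.symm]
      have humem : u ∈ PF i0 i1 (S2 lam) := by
        refine ⟨Or.inr ⟨⟨?_, ?_⟩, ?_, ?_⟩, fun i hi => ?_⟩
        · rw [hui0, le_div_iff₀ hτ0]; linarith
        · rw [hui0, div_le_iff₀ hτ0]; linarith
        · rw [hui1]; positivity
        · rw [hui1, div_le_one hτ0]; linarith
        · have hne0 : i ≠ i0 := fun h => by rw [h, hi0] at hi; omega
          have hne1 : i ≠ i1 := fun h => by rw [h, hi1] at hi; omega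
          simp only [hu, if_neg hne0, if_neg hne1]
          exact htail i hi
      refine ⟨τ • u, smul_mem_smul_set humem, (1-τ) • z, smul_mem_smul_set hzmem, ?_⟩
      funext i
      simp only [Pi.add_apply, Pi.smul_apply, smul_eq_mul, hz]
      by_cases hcase0 : i = i0
      · subst hcase0
        rw [hui0, if_pos (by omega : (i:ℕ) < 2)]
        field_simp
        ring
      by_cases hcase1 : i = i1
      · subst hcase1
        rw [hui1, if_pos (by omega : (i:ℕ) < 2)]
        field_simp
        ring
      · have hn2 : ¬ ((i:ℕ) < 2) := by
          intro h; rcases hfin2 i h with rfl | rfl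
          exacts [hcase0 rfl, hcase1 rfl]
        have hui : u i = y i := by simp only [hu, if_neg hcase0, if_neg hcase1]
        rw [hui, if_neg hn2]
        ring
    · -- (1-τ) piece
      simp only [Set.mem_prod, Set.mem_Icc] at hT'
      obtain ⟨⟨a1, a2⟩, b1, b2⟩ := hT'
      have hτ1' : (0:ℝ) < 1 - τ := by linarith
      set u : Fin n → ℝ :=
        fun i => if i = i0 then y i0 / (1-τ) else if i = i1 then y i1 / (1-τ) else y i with hu
      have hui0 : u i0 = y i0 / (1-τ) := by rw [hu]; simp
      have hui1 : u i1 = y i1 / (1-τ) := by rw [hu]; simp [h01.symm]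
      have humem : u ∈ PF i0 i1 (S2 lam) := by
        refine ⟨Or.inr ⟨⟨?_, ?_⟩, ?_, ?_⟩, fun i hi => ?_⟩
        · rw [hui0, le_div_iff₀ hτ1']; linarith
        · rw [hui0, div_le_iff₀ hτ1']; linarith
        · rw [hui1]; positivity
        · rw [hui1, div_le_one hτ1']; linarith
        · have hne0 : i ≠ i0 := fun h => by rw [h, hi0] at hi; omega
          have hne1 : i ≠ i1 := fun h => by rw [h, hi1] at hi; omega
          simp only [hu, if_neg hne0, if_neg hne1]
          exact htail i hi
      refine ⟨τ • z, smul_mem_smul_set hzmem, (1-τ) • u, smul_mem_smul_set humem, ?_⟩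
      funext i
      simp only [Pi.add_apply, Pi.smul_apply, smul_eq_mul, hz]
      by_cases hcase0 : i = i0
      · subst hcase0
        rw [hui0, if_pos (by omega : (i:ℕ) < 2)]
        field_simp
        ring
      by_cases hcase1 : i = i1
      · subst hcase1
        rw [hui1, if_pos (by omega : (i:ℕ) < 2)]
        field_simp
        ring
      · have hn2 : ¬ ((i:ℕ) < 2) := by
          intro h; rcases hfin2 i h with rfl | rfl
          exacts [hcase0 rfl, hcase1 rfl]
        have hui : u i = y i := by simp only [hu, if_neg hcase0, if_neg hcase1]
        rw [hui, if_neg hn2]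
        ring


lemma vol_tri (lam : ℝ) (hlam : 0 < lam) :
    volume {p : ℝ × ℝ | 0 ≤ p.1 ∧ p.1 ≤ lam ∧ 0 ≤ p.2 ∧ lam * p.2 ≤ p.1}
      = ENNReal.ofReal (lam / 2) := by
  set Tri : Set (ℝ × ℝ) := {p | 0 ≤ p.1 ∧ p.1 ≤ lam ∧ 0 ≤ p.2 ∧ lam * p.2 ≤ p.1} with hTri
  have hmeas : MeasurableSet Tri := by
    apply MeasurableSet.inter
    · exact measurable_fst measurableSet_Ici
    apply MeasurableSet.inter
    · exact measurable_fst measurableSet_Iic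
    apply MeasurableSet.inter
    · exact measurable_snd measurableSet_Ici
    · exact measurableSet_le (measurable_snd.const_mul lam) measurable_fst
  have hprod : (volume : Measure (ℝ × ℝ)) = (volume : Measure ℝ).prod volume := rfl
  rw [hprod, Measure.prod_apply hmeas]
  have hsec : ∀ x : ℝ, volume (Prod.mk x ⁻¹' Tri)
      = (Icc (0:ℝ) lam).indicator (fun x => ENNReal.ofReal (x / lam)) x := by
    intro x
    by_cases hx : x ∈ Icc (0:ℝ) lam
    · have : Prod.mk x ⁻¹' Tri = Icc 0 (x / lam) := by
        ext y
        simp only [hTri, Set.mem_preimage, Set.mem_setOf_eq, Set.mem_Icc]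
        constructor
        · rintro ⟨_, _, hy0, hy1⟩
          exact ⟨hy0, (le_div_iff₀' hlam).2 hy1⟩
        · rintro ⟨hy0, hy1⟩
          exact ⟨hx.1, hx.2, hy0, (le_div_iff₀' hlam).1 hy1⟩
      rw [this, Real.volume_Icc, indicator_of_mem hx]
      simp
    · have : Prod.mk x ⁻¹' Tri = ∅ := by
        ext y
        simp only [hTri, Set.mem_preimage, Set.mem_setOf_eq, Set.mem_empty_iff_false, iff_false]
        rintro ⟨h1, h2, _, _⟩
        exact hx ⟨h1, h2⟩
      rw [this, indicator_of_notMem hx]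
      simp
  simp only [hsec]
  rw [lintegral_indicator measurableSet_Icc]
  have hint : IntegrableOn (fun x : ℝ => x / lam) (Icc 0 lam) :=
    (continuous_id.div_const lam).integrableOn_Icc
  rw [← ofReal_integral_eq_lintegral_ofReal hint
      ((ae_restrict_iff' measurableSet_Icc).2 (ae_of_all _ fun x hx => div_nonneg hx.1 hlam.le))]
  congr 1
  rw [integral_Icc_eq_integral_Ioc, ← intervalIntegral.integral_of_le hlam.le]
  rw [intervalIntegral.integral_div, integral_id]
  field_simp
  ring

def Tri (lam : ℝ) : Set (ℝ × ℝ) := {p | 0 ≤ p.1 ∧ p.1 ≤ lam ∧ 0 ≤ p.2 ∧ lam * p.2 ≤ p.1}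

lemma meas_tri (lam : ℝ) : MeasurableSet (Tri lam) := by
  apply MeasurableSet.inter
  · exact measurable_fst measurableSet_Ici
  apply MeasurableSet.inter
  · exact measurable_fst measurableSet_Iic
  apply MeasurableSet.inter
  · exact measurable_snd measurableSet_Ici
  · exact measurableSet_le (measurable_snd.const_mul lam) measurable_fst

lemma meas_S2 (lam : ℝ) : MeasurableSet (S2 lam) :=
  (measurableSet_singleton _).union (measurableSet_Icc.prod measurableSet_Icc)

lemma hull_diff (lam : ℝ) (hlam : 0 < lam) : Hull2 lam \ S2 lam = Tri lam \ S2 lam := by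
  ext p
  simp only [Set.mem_diff, Hull2, Tri, Set.mem_setOf_eq, and_congr_left_iff]
  intro hp
  constructor
  · rintro ⟨h1, h2, h3, h4, h5⟩
    rcases le_or_gt p.1 lam with h | h
    · exact ⟨h1, h, h3, h5⟩
    · exact absurd (Or.inr ⟨⟨h.le, h2⟩, h3, h4⟩) hp
  · rintro ⟨h1, h2, h3, h4⟩
    have hp2 : p.2 ≤ 1 := by nlinarith
    exact ⟨h1, by linarith, h3, hp2, h4⟩

lemma vol_tri_diff (lam : ℝ) (hlam : 0 < lam) :
    volume (Tri lam \ S2 lam) = ENNReal.ofReal (lam / 2) := by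
  rw [← Set.diff_self_inter]
  have hsub : Tri lam ∩ S2 lam ⊆ ({0, lam} : Set ℝ) ×ˢ (Set.univ : Set ℝ) := by
    rintro p ⟨hTri, hS⟩
    rcases hS with h0 | hR
    · simp only [Set.mem_singleton_iff] at h0
      subst h0
      exact ⟨by simp, trivial⟩
    · exact ⟨Or.inr (le_antisymm hTri.2.1 hR.1.1), trivial⟩
  have hnull : volume (Tri lam ∩ S2 lam) = 0 := by
    refine measure_mono_null hsub ?_
    rw [show (volume : Measure (ℝ × ℝ)) = (volume : Measure ℝ).prod volume from rfl,
      Measure.prod_prod,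
      Set.Countable.measure_zero (Set.countable_insert.2 (Set.countable_singleton _)) _,
      zero_mul]
  rw [measure_diff_null hnull]
  exact vol_tri lam hlam

lemma d_diff (τ lam : ℝ) (hτ0 : 0 < τ) (hτ2 : τ ≤ 1/2) (hlam : 0 < lam) (hlam2 : lam ≤ τ) :
    D2 τ lam \ S2 lam =
      (Set.Ico (τ*lam) lam ×ˢ Set.Icc (0:ℝ) τ) ∪
        (Set.Ico ((1-τ)*lam) lam ×ˢ Set.Icc (0:ℝ) (1-τ)) := by
  have hτ1 : τ < 1 := by linarith
  ext p
  simp only [D2, S2, R2, Set.mem_diff, Set.mem_union, Set.mem_singleton_iff, Set.mem_prod,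
    Set.mem_Icc, Set.mem_Ico, Prod.ext_iff, Prod.fst_zero, Prod.snd_zero]
  constructor
  · rintro ⟨((hS | hT) | hT'), hns⟩
    · exact absurd hS hns
    · obtain ⟨⟨a1, a2⟩, b1, b2⟩ := hT
      have hlt : p.1 < lam := by
        by_contra h
        push_neg at h
        exact hns (Or.inr ⟨⟨h, by nlinarith⟩, b1, by linarith⟩)
      exact Or.inl ⟨⟨a1, hlt⟩, b1, b2⟩
    · obtain ⟨⟨a1, a2⟩, b1, b2⟩ := hT'
      have hlt : p.1 < lam := by
        by_contra h
        push_neg at h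
        exact hns (Or.inr ⟨⟨h, by nlinarith⟩, b1, by linarith⟩)
      exact Or.inr ⟨⟨a1, hlt⟩, b1, b2⟩
  · rintro (⟨⟨a1, a2⟩, b1, b2⟩ | ⟨⟨a1, a2⟩, b1, b2⟩)
    · refine ⟨Or.inl (Or.inr ⟨⟨a1, by nlinarith⟩, b1, by linarith⟩), ?_⟩
      rintro (h0 | hR)
      · nlinarith [h0.1]
      · exact absurd hR.1.1 (not_le.2 a2)
    · refine ⟨Or.inr ⟨⟨a1, by nlinarith⟩, b1, by linarith⟩, ?_⟩
      rintro (h0 | hR)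
      · nlinarith [h0.1]
      · exact absurd hR.1.1 (not_le.2 a2)

lemma vol_d_diff (τ lam : ℝ) (hτ0 : 0 < τ) (hτ2 : τ ≤ 1/2) (hlam : 0 < lam) :
    volume ((Set.Ico (τ*lam) lam ×ˢ Set.Icc (0:ℝ) τ) ∪
        (Set.Ico ((1-τ)*lam) lam ×ˢ Set.Icc (0:ℝ) (1-τ)))
      = ENNReal.ofReal (τ * lam * (2 - 3 * τ)) := by
  have hτ1 : τ < 1 := by linarith
  set U1 := Set.Ico (τ*lam) lam ×ˢ Set.Icc (0:ℝ) τ with hU1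
  set U2 := Set.Ico ((1-τ)*lam) lam ×ˢ Set.Icc (0:ℝ) (1-τ) with hU2
  have hmeas2 : MeasurableSet U2 := measurableSet_Ico.prod measurableSet_Icc
  have hinter : U1 ∩ U2 = Set.Ico ((1-τ)*lam) lam ×ˢ Set.Icc (0:ℝ) τ := by
    rw [hU1, hU2, Set.prod_inter_prod, Set.Ico_inter_Ico, Set.Icc_inter_Icc]
    congr 1
    · rw [max_eq_right (by nlinarith), min_self]
    · rw [max_self, min_eq_left (by linarith)]
  have key := measure_union_add_inter (μ := volume) U1 hmeas2
  have hprod : (volume : Measure (ℝ × ℝ)) = (volume : Measure ℝ).prod volume := rfl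
  have hv1 : volume U1 = ENNReal.ofReal ((lam - τ*lam) * τ) := by
    rw [hU1, hprod, Measure.prod_prod, Real.volume_Ico, Real.volume_Icc,
      ← ENNReal.ofReal_mul (by nlinarith)]
    norm_num
  have hv2 : volume U2 = ENNReal.ofReal ((lam - (1-τ)*lam) * (1-τ)) := by
    rw [hU2, hprod, Measure.prod_prod, Real.volume_Ico, Real.volume_Icc,
      ← ENNReal.ofReal_mul (by nlinarith)]
    norm_num
  have hv3 : volume (U1 ∩ U2) = ENNReal.ofReal ((lam - (1-τ)*lam) * τ) := by
    rw [hinter, hprod, Measure.prod_prod, Real.volume_Ico, Real.volume_Icc,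
      ← ENNReal.ofReal_mul (by nlinarith)]
    norm_num
  rw [hv1, hv2, hv3] at key
  have hn0 : (0:ℝ) ≤ lam - τ*lam := by nlinarith [mul_nonneg hlam.le (by linarith : (0:ℝ) ≤ 1-τ)]
  have hn0' : (0:ℝ) ≤ lam - (1-τ)*lam := by nlinarith [mul_nonneg hτ0.le hlam.le]
  have hn1 : (0:ℝ) ≤ (lam - τ*lam)*τ := mul_nonneg hn0 hτ0.le
  have hn2 : (0:ℝ) ≤ (lam - (1-τ)*lam)*(1-τ) := mul_nonneg hn0' (by linarith)
  have hn3 : (0:ℝ) ≤ (lam - (1-τ)*lam)*τ := mul_nonneg hn0' hτ0.le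
  have hn4 : (0:ℝ) ≤ τ*lam*(2-3*τ) := mul_nonneg (mul_nonneg hτ0.le hlam.le) (by linarith)
  apply (ENNReal.add_left_inj
    (ENNReal.ofReal_ne_top : ENNReal.ofReal ((lam - (1-τ)*lam) * τ) ≠ ⊤)).1
  rw [key, ← ENNReal.ofReal_add hn4 hn3, ← ENNReal.ofReal_add hn1 hn2]
  congr 1
  ring


lemma vol_prodform {n : ℕ} (hn : 2 ≤ n) (T : Set (ℝ × ℝ)) (hT : MeasurableSet T) :
    volume {y : Fin n → ℝ | (y ⟨0, by linarith⟩, y ⟨1, by linarith⟩) ∈ T ∧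
      ∀ i : Fin n, 2 ≤ (i : ℕ) → y i ∈ Set.Icc (0:ℝ) 1} = volume T := by
  classical
  set p : Fin n → Prop := fun i => (i : ℕ) < 2 with hp
  set e := MeasurableEquiv.piEquivPiSubtypeProd (fun _ : Fin n => ℝ) p with he
  have hmp := volume_preserving_piEquivPiSubtypeProd (fun _ : Fin n => ℝ) p
  set g : Fin 2 ≃ {i : Fin n // p i} :=
    { toFun := fun j => ⟨⟨(j : ℕ), by omega⟩, by simpa [p] using j.2⟩
      invFun := fun i => ⟨(i.1 : ℕ), i.2⟩
      left_inv := fun j => by ext; simp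
      right_inv := fun i => by ext; simp } with hg
  set F : ({i : Fin n // p i} → ℝ) ≃ᵐ ℝ × ℝ :=
    ((MeasurableEquiv.piCongrLeft (fun _ => ℝ) g).symm.trans MeasurableEquiv.finTwoArrow) with hF
  have hmF : MeasurePreserving F volume volume :=
    (volume_preserving_finTwoArrow ℝ).comp
      ((volume_measurePreserving_piCongrLeft (fun _ => ℝ) g).symm _)
  set T' : Set ({i : Fin n // p i} → ℝ) := F ⁻¹' T with hT'
  set Q : Set ({i : Fin n // ¬ p i} → ℝ) := Set.univ.pi fun _ => Set.Icc (0:ℝ) 1 with hQ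
  have hFv : ∀ v : {i : Fin n // p i} → ℝ,
      F v = (v ⟨⟨0, by linarith⟩, by simp [p]⟩, v ⟨⟨1, by linarith⟩, by simp [p]⟩) := by
    intro v
    have h0 : (g 0) = ⟨⟨0, by linarith⟩, by simp [p]⟩ := by apply Subtype.ext; ext; simp [hg]
    have h1 : (g 1) = ⟨⟨1, by linarith⟩, by simp [p]⟩ := by apply Subtype.ext; ext; simp [hg]
    have : F v = ((v ∘ g) 0, (v ∘ g) 1) := rfl
    rw [this]; simp [h0, h1]
  have hset : {y : Fin n → ℝ | (y ⟨0, by linarith⟩, y ⟨1, by linarith⟩) ∈ T ∧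
      ∀ i : Fin n, 2 ≤ (i : ℕ) → y i ∈ Set.Icc (0:ℝ) 1} = e ⁻¹' (T' ×ˢ Q) := by
    ext y
    simp only [Set.mem_setOf_eq, Set.mem_preimage, Set.mem_prod, hT', Set.mem_preimage, hFv,
      MeasurableEquiv.piEquivPiSubtypeProd, hQ, Set.mem_pi, Set.mem_univ, forall_true_left, he]
    constructor
    · rintro ⟨h1, h2⟩
      refine ⟨by simpa using h1, fun i => h2 i.1 (by have := i.2; simp only [p] at this; omega)⟩
    · rintro ⟨h1, h2⟩
      exact ⟨by simpa using h1, fun i hi => by simpa using h2 ⟨i, by simp [p]; omega⟩⟩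
  rw [hset, hmp.measure_preimage ((hT.preimage F.measurable).prod
      (MeasurableSet.univ_pi fun _ => measurableSet_Icc)).nullMeasurableSet]
  rw [show (volume : Measure (({i : Fin n // p i} → ℝ) × ({i : Fin n // ¬ p i} → ℝ)))
      = (volume : Measure _).prod volume from rfl, Measure.prod_prod,
    hmF.measure_preimage hT.nullMeasurableSet]
  have : volume Q = 1 := by
    rw [hQ, volume_pi_pi]
    simp [Real.volume_Icc]
  rw [this, mul_one]

lemma vol_PF {n : ℕ} (hn : 2 ≤ n) (T : Set (ℝ × ℝ)) (hT : MeasurableSet T) :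
    volume (PF (⟨0, by linarith⟩ : Fin n) ⟨1, by linarith⟩ T) = volume T := vol_prodform hn T hT

/-- Sharpness example: for `n ≥ 2`, `τ ∈ (0,1/2]`, `t = τ` and
`A = ({(0,0)} ∪ [λ,1+λ]×[0,1]) × [0,1]^{n-2}`, for all sufficiently small `λ > 0` one has
`|co(A) \ A| = λ/2` and `δ(A;t) = |(tA + (1-t)A) \ A| = τλ(2-3τ)`. -/
theorem stmt12 {n : ℕ} (hn : 2 ≤ n) (τ : ℝ) (hτ : τ ∈ Set.Ioc (0:ℝ) (1/2)) :
    ∃ lam0 : ℝ, 0 < lam0 ∧ ∀ lam : ℝ, 0 < lam → lam ≤ lam0 →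
      (fun (A : Set (Fin n → ℝ)) =>
        volume (convexHull ℝ A \ A) = ENNReal.ofReal (lam / 2) ∧
        volume ((τ • A + (1 - τ) • A) \ A) = ENNReal.ofReal (τ * lam * (2 - 3 * τ)))
      {y : Fin n → ℝ |
        ((y ⟨0, by omega⟩ = 0 ∧ y ⟨1, by omega⟩ = 0) ∨
          (y ⟨0, by omega⟩ ∈ Set.Icc lam (1 + lam) ∧ y ⟨1, by omega⟩ ∈ Set.Icc (0:ℝ) 1)) ∧
        ∀ i : Fin n, 2 ≤ (i : ℕ) → y i ∈ Set.Icc (0:ℝ) 1} := by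
  obtain ⟨hτ0, hτ2⟩ := hτ
  refine ⟨τ, hτ0, ?_⟩
  intro lam hlam hlam2
  show _ ∧ _
  have hτ1 : τ < 1 := by linarith
  have hA : {y : Fin n → ℝ |
        ((y ⟨0, by omega⟩ = 0 ∧ y ⟨1, by omega⟩ = 0) ∨
          (y ⟨0, by omega⟩ ∈ Set.Icc lam (1 + lam) ∧ y ⟨1, by omega⟩ ∈ Set.Icc (0:ℝ) 1)) ∧
        ∀ i : Fin n, 2 ≤ (i : ℕ) → y i ∈ Set.Icc (0:ℝ) 1}
      = PF (⟨0, by omega⟩ : Fin n) ⟨1, by omega⟩ (S2 lam) := by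
    ext y
    simp only [PF, S2, R2, Set.mem_union, Set.mem_singleton_iff, Prod.ext_iff, Prod.fst_zero,
      Prod.snd_zero, Set.mem_prod, Set.mem_setOf_eq]
  rw [hA]
  constructor
  · rw [hull_eq _ _ rfl rfl lam hlam, PF_diff, hull_diff lam hlam,
      vol_PF hn _ ((meas_tri lam).diff (meas_S2 lam)), vol_tri_diff lam hlam]
  · rw [mink_eq _ _ rfl rfl τ lam hτ0 hτ1 hlam, PF_diff, d_diff τ lam hτ0 hτ2 hlam hlam2,
      vol_PF hn _ ((measurableSet_Ico.prod measurableSet_Icc).union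
        (measurableSet_Ico.prod measurableSet_Icc)),
      vol_d_diff τ lam hτ0 hτ2 hlam]
end

section
/- Exponential lower bound example: let R ≥ 2 and A = [0,2]^{n−1} × [−R, 0] ∪ {(0,…,0,2)} ⊆ ℝⁿ. Then (A + A)/2 = A ∪ [0,1]ⁿ, so δ(A; 1/2) = |(A+A)/2 \ A| = 1, while |co(A) \ A| = ∫₀² (2−x)^{n−1} dx = 2ⁿ/n. -/
open MeasureTheory Set
open scoped ENNReal Pointwise

private lemma coneVol (m : ℕ) :
    volume {y : Fin (m+1) → ℝ | y (Fin.last m) ∈ Set.Ioc (0:ℝ) 2 ∧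
      ∀ j : Fin m, y j.castSucc ∈ Set.Icc (0:ℝ) (2 - y (Fin.last m))}
      = ENNReal.ofReal (2 ^ (m+1) / (m+1)) := by
  set e := MeasurableEquiv.piFinSuccAbove (fun _ : Fin (m+1) => ℝ) (Fin.last m)
  set S : Set (ℝ × (Fin m → ℝ)) :=
    {q | q.1 ∈ Set.Ioc (0:ℝ) 2 ∧ ∀ j, q.2 j ∈ Set.Icc (0:ℝ) (2 - q.1)}
  have hSmeas : MeasurableSet S := by
    apply MeasurableSet.inter
    · exact measurable_fst measurableSet_Ioc
    · show MeasurableSet {q : ℝ × (Fin m → ℝ) | ∀ j, q.2 j ∈ Set.Icc (0:ℝ) (2 - q.1)}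
      rw [show {q : ℝ × (Fin m → ℝ) | ∀ j, q.2 j ∈ Set.Icc (0:ℝ) (2 - q.1)}
        = ⋂ j, {q | 0 ≤ q.2 j} ∩ {q | q.2 j ≤ 2 - q.1} by ext q; simp [Set.mem_Icc, forall_and]]
      refine MeasurableSet.iInter fun j => MeasurableSet.inter ?_ ?_
      · exact measurableSet_le measurable_const (measurable_snd.eval)
      · exact measurableSet_le (measurable_snd.eval) (measurable_const.sub measurable_fst)
  have hpre : {y : Fin (m+1) → ℝ | y (Fin.last m) ∈ Set.Ioc (0:ℝ) 2 ∧
      ∀ j : Fin m, y j.castSucc ∈ Set.Icc (0:ℝ) (2 - y (Fin.last m))} = e ⁻¹' S := by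
    ext y
    simp [e, S, MeasurableEquiv.piFinSuccAbove, Fin.succAbove_last, Fin.init]
  rw [hpre, volume_pi, (measurePreserving_piFinSuccAbove (fun _ : Fin (m+1) => (volume : Measure ℝ))
    (Fin.last m)).measure_preimage hSmeas.nullMeasurableSet]
  rw [Measure.prod_apply hSmeas]
  have hslice : ∀ x : ℝ, (volume : Measure (Fin m → ℝ)) (Prod.mk x ⁻¹' S)
      = Set.indicator (Set.Ioc (0:ℝ) 2) (fun x => ENNReal.ofReal ((2 - x) ^ m)) x := by
    intro x
    by_cases hx : x ∈ Set.Ioc (0:ℝ) 2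
    · have : Prod.mk x ⁻¹' S = Set.pi Set.univ (fun _ : Fin m => Set.Icc (0:ℝ) (2 - x)) := by
        ext w; simp only [S, Set.mem_setOf_eq, Set.mem_preimage, Set.mem_pi,
          Set.mem_univ, forall_true_left, Set.mem_Icc, Set.mem_Ioc]
        exact ⟨fun h => h.2, fun h => ⟨⟨hx.1, hx.2⟩, h⟩⟩
      have hxn : (0:ℝ) ≤ 2 - x := by linarith [hx.2]
      rw [this, Set.indicator_of_mem hx, volume_pi_pi]
      simp [Real.volume_Icc, ENNReal.ofReal_pow hxn]
    · have h2 : Prod.mk x ⁻¹' S = ∅ := by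
        ext w
        simp only [S, Set.mem_preimage, Set.mem_setOf_eq, Set.mem_empty_iff_false, iff_false]
        intro h; exact hx h.1
      simp [h2, Set.indicator_of_notMem hx]
  simp_rw [← volume_pi]
  simp_rw [hslice]
  rw [lintegral_indicator measurableSet_Ioc]
  rw [← ofReal_integral_eq_lintegral_ofReal]
  · rw [show (∫ x in Set.Ioc (0:ℝ) 2, (2 - x) ^ m) = ∫ x in (0:ℝ)..2, (2 - x) ^ m by
      rw [intervalIntegral.integral_of_le (by norm_num)]]
    rw [intervalIntegral.integral_comp_sub_left (fun x => x ^ m) 2]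
    norm_num [integral_pow]
  · apply Continuous.integrableOn_Ioc; continuity
  · filter_upwards [self_mem_ae_restrict measurableSet_Ioc] with x hx
    exact pow_nonneg (by linarith [hx.2]) m

/-- Exponential lower bound example: for `R ≥ 2` and
`A = [0,2]^{n-1} × [-R,0] ∪ {(0,…,0,2)} ⊆ ℝⁿ`, one has `(A+A)/2 = A ∪ [0,1]ⁿ`,
hence `δ(A;1/2) = |(A+A)/2 \ A| = 1`, while `|co(A) \ A| = 2ⁿ/n`. -/
theorem stmt13 {n : ℕ} (hn : 1 ≤ n) (R : ℝ) (hR : 2 ≤ R)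
    (last : Fin n) (hlast : (last : ℕ) = n - 1)
    (A : Set (Fin n → ℝ))
    (hA : A = {y : Fin n → ℝ |
        (∀ i : Fin n, i ≠ last → y i ∈ Set.Icc (0:ℝ) 2) ∧ y last ∈ Set.Icc (-R) 0}
      ∪ {fun i => if i = last then 2 else 0}) :
    ((1/2 : ℝ) • A + (1/2 : ℝ) • A) = A ∪ {y : Fin n → ℝ | ∀ i, y i ∈ Set.Icc (0:ℝ) 1} ∧
    volume (((1/2 : ℝ) • A + (1/2 : ℝ) • A) \ A) = 1 ∧
    volume (convexHull ℝ A \ A) = ENNReal.ofReal (2 ^ n / n) := by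
  obtain ⟨m, rfl⟩ : ∃ m, n = m + 1 := ⟨n - 1, (Nat.succ_pred_eq_of_pos hn).symm⟩
  have hl : last = Fin.last m := Fin.ext (by simp [hlast])
  subst hl
  clear hn hlast
  set p : Fin (m+1) → ℝ := fun i => if i = Fin.last m then 2 else 0 with hp
  have hpA : p ∈ A := by rw [hA]; right; rfl
  have hcoord : ∀ (a b : Fin (m+1) → ℝ) (i : Fin (m+1)),
      ((1/2:ℝ) • a + (1/2:ℝ) • b) i = (a i + b i) / 2 := by
    intro a b i; simp [Pi.smul_apply, smul_eq_mul]; ring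
  -- Part 1
  have key1 : ((1/2:ℝ) • A + (1/2:ℝ) • A)
      = A ∪ {y : Fin (m+1) → ℝ | ∀ i, y i ∈ Set.Icc (0:ℝ) 1} := by
    ext z
    simp only [Set.mem_add, Set.mem_smul_set, Set.mem_union, Set.mem_setOf_eq]
    constructor
    · rintro ⟨_, ⟨a, ha, rfl⟩, _, ⟨b, hb, rfl⟩, rfl⟩
      rw [hA] at ha hb
      have hmix : ∀ c : Fin (m+1) → ℝ,
          ((∀ i : Fin (m+1), i ≠ Fin.last m → c i ∈ Set.Icc (0:ℝ) 2) ∧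
            c (Fin.last m) ∈ Set.Icc (-R) 0) →
          ((1/2:ℝ) • c + (1/2:ℝ) • p) ∈ A ∨
          (∀ i, ((1/2:ℝ) • c + (1/2:ℝ) • p) i ∈ Set.Icc (0:ℝ) 1) := by
        intro c hc
        by_cases hs : 0 ≤ ((1/2:ℝ) • c + (1/2:ℝ) • p) (Fin.last m)
        · right
          intro i
          rw [hcoord]
          by_cases hi : i = Fin.last m
          · subst hi
            rw [hcoord] at hs
            constructor
            · exact hs
            · have := hc.2.2; simp [p]; linarith
          · have h0 := hc.1 i hi
            simp [p, hi]
            constructor <;> [linarith [h0.1]; linarith [h0.2]]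
        · left
          rw [hA]; left
          constructor
          · intro i hi
            rw [hcoord]
            have h0 := hc.1 i hi
            simp [p, hi]
            constructor <;> [linarith [h0.1]; linarith [h0.2]]
          · rw [hcoord] at hs ⊢
            have := hc.2.1
            simp [p] at hs ⊢
            constructor <;> linarith
      rcases ha with ha | ha <;> rcases hb with hb | hb
      · -- both in box
        left; rw [hA]; left
        constructor
        · intro i hi
          rw [hcoord]
          have h1 := ha.1 i hi; have h2 := hb.1 i hi
          constructor <;> [linarith [h1.1, h2.1]; linarith [h1.2, h2.2]]
        · rw [hcoord]
          have h1 := ha.2; have h2 := hb.2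
          constructor <;> [linarith [h1.1, h2.1]; linarith [h1.2, h2.2]]
      · rw [Set.mem_singleton_iff] at hb; subst hb
        exact hmix a ha
      · rw [Set.mem_singleton_iff] at ha; subst ha
        have := hmix b hb
        rw [show (1/2:ℝ) • p + (1/2:ℝ) • b = (1/2:ℝ) • b + (1/2:ℝ) • p by abel]
        exact this
      · rw [Set.mem_singleton_iff] at ha hb; subst ha; subst hb
        left
        have : (1/2:ℝ) • p + (1/2:ℝ) • p = p := by
          funext i; rw [hcoord]; ring
        rw [this]; exact hpA
    · rintro (hz | hz)
      · exact ⟨(1/2:ℝ) • z, ⟨z, hz, rfl⟩, (1/2:ℝ) • z, ⟨z, hz, rfl⟩,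
          by funext i; rw [hcoord]; ring⟩
      · set a : Fin (m+1) → ℝ :=
          fun i => if i = Fin.last m then 2 * z (Fin.last m) - 2 else 2 * z i with ha
        have haA : a ∈ A := by
          rw [hA]; left
          constructor
          · intro i hi
            have h0 := hz i
            rw [Set.mem_Icc] at h0 ⊢
            simp only [ha, if_neg hi]
            constructor <;> linarith
          · have h0 := hz (Fin.last m)
            rw [Set.mem_Icc] at h0 ⊢
            simp only [ha, if_pos rfl]
            constructor <;> linarith
        refine ⟨(1/2:ℝ) • a, ⟨a, haA, rfl⟩, (1/2:ℝ) • p, ⟨p, hpA, rfl⟩, ?_⟩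
        funext i
        rw [hcoord]
        by_cases hi : i = Fin.last m
        · subst hi; simp only [ha, hp, if_pos rfl]; ring
        · simp only [ha, hp, if_neg hi]; ring
  refine ⟨key1, ?_, ?_⟩
  -- Part 2
  · rw [key1, Set.union_diff_left]
    have hnull : volume ({y : Fin (m+1) → ℝ | ∀ i, y i ∈ Set.Icc (0:ℝ) 1} ∩ A) = 0 := by
      refine measure_mono_null (?_ : _ ⊆
        (Set.pi Set.univ fun i : Fin (m+1) =>
          if i = Fin.last m then ({0} : Set ℝ) else Set.Icc 0 1) ∪ {p}) ?_
      · rintro y ⟨hy, hyA⟩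
        rw [hA] at hyA
        rcases hyA with hyB | hyp
        · left
          intro i _
          by_cases hi : i = Fin.last m
          · subst hi; simp only [if_pos rfl, Set.mem_singleton_iff]
            exact le_antisymm hyB.2.2 (hy _).1
          · simp only [if_neg hi]; exact hy i
        · right; exact hyp
      · refine measure_union_null ?_ (measure_singleton p)
        rw [volume_pi_pi]
        refine Finset.prod_eq_zero (Finset.mem_univ (Fin.last m)) ?_
        simp
    rw [measure_diff_null' hnull]
    rw [show {y : Fin (m+1) → ℝ | ∀ i, y i ∈ Set.Icc (0:ℝ) 1}
        = Set.pi Set.univ (fun _ : Fin (m+1) => Set.Icc (0:ℝ) 1) by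
      ext y
      simp only [Set.mem_setOf_eq, Set.mem_pi, Set.mem_univ, forall_true_left]]
    rw [volume_pi_pi]
    simp [Real.volume_Icc]
  -- Part 3
  · set D : Set (Fin (m+1) → ℝ) := {y | y (Fin.last m) ∈ Set.Ioc (0:ℝ) 2 ∧
      ∀ j : Fin m, y j.castSucc ∈ Set.Icc (0:ℝ) (2 - y (Fin.last m))} with hD
    set K : Set (Fin (m+1) → ℝ) := {y | -R ≤ y (Fin.last m) ∧ y (Fin.last m) ≤ 2 ∧
      ∀ i, i ≠ Fin.last m → (0 ≤ y i ∧ y i ≤ 2 ∧ y i + y (Fin.last m) ≤ 2)} with hK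
    have hKconv : Convex ℝ K := by
      intro x hx y hy a b ha hb hab
      have hc : ∀ i, (a • x + b • y) i = a * x i + b * y i := by
        intro i; simp [Pi.smul_apply, smul_eq_mul]
      refine ⟨?_, ?_, fun i hi => ⟨?_, ?_, ?_⟩⟩
      · rw [hc]; nlinarith [hx.1, hy.1]
      · rw [hc]; nlinarith [hx.2.1, hy.2.1]
      · rw [hc]; nlinarith [(hx.2.2 i hi).1, (hy.2.2 i hi).1]
      · rw [hc]; nlinarith [(hx.2.2 i hi).2.1, (hy.2.2 i hi).2.1]
      · rw [hc, hc]; nlinarith [(hx.2.2 i hi).2.2, (hy.2.2 i hi).2.2]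
    have hAK : A ⊆ K := by
      rw [hA]
      rintro y (hy | hy)
      · refine ⟨hy.2.1, by linarith [hy.2.2], fun i hi => ?_⟩
        have := hy.1 i hi
        exact ⟨this.1, this.2, by linarith [this.2, hy.2.2]⟩
      · rw [Set.mem_singleton_iff] at hy; subst hy
        refine ⟨?_, ?_, fun i hi => ?_⟩
        · simp only [hp, if_pos rfl]; linarith
        · simp only [hp, if_pos rfl]; norm_num
        · simp only [hp, if_neg hi, if_pos rfl]
          norm_num
    have hcoK : convexHull ℝ A ⊆ K := convexHull_min hAK hKconv
    have hDA : convexHull ℝ A \ A = D \ {p} := by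
      ext y
      constructor
      · rintro ⟨hyco, hyA⟩
        have hyK := hcoK hyco
        have hypne : y ≠ p := fun h => hyA (h ▸ hpA)
        have hpos : 0 < y (Fin.last m) := by
          by_contra h
          push_neg at h
          apply hyA
          rw [hA]; left
          exact ⟨fun i hi => ⟨(hyK.2.2 i hi).1, (hyK.2.2 i hi).2.1⟩, hyK.1, h⟩
        refine ⟨⟨⟨hpos, hyK.2.1⟩, fun j => ?_⟩, hypne⟩
        have hne : j.castSucc ≠ Fin.last m := (Fin.castSucc_lt_last j).ne
        have := hyK.2.2 j.castSucc hne
        exact ⟨this.1, by linarith [this.2.2]⟩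
      · rintro ⟨hyD, hypne⟩
        rw [Set.mem_singleton_iff] at hypne
        have hyA : y ∉ A := by
          rw [hA]
          rintro (hy | hy)
          · have := hy.2.2
            have := hyD.1.1
            linarith
          · exact hypne hy
        refine ⟨?_, hyA⟩
        have hx2 : y (Fin.last m) < 2 := by
          rcases lt_or_eq_of_le hyD.1.2 with h | h
          · exact h
          · exfalso
            apply hypne
            funext i
            rcases Fin.eq_castSucc_or_eq_last i with ⟨j, rfl⟩ | rfl
            · have := hyD.2 j
              rw [← h] at this
              have h1 : y j.castSucc = 0 := le_antisymm (by linarith [this.2]) this.1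
              rw [h1]
              simp [p, (Fin.castSucc_lt_last j).ne]
            · simp [p, ← h]
        set t : ℝ := y (Fin.last m) / 2 with ht
        have ht0 : 0 < t := by have := hyD.1.1; positivity
        have ht1 : t < 1 := by rw [ht]; linarith
        have h1t : (0:ℝ) < 1 - t := by linarith
        set b : Fin (m+1) → ℝ :=
          fun i => if i = Fin.last m then 0 else y i / (1 - t) with hb
        have hbA : b ∈ A := by
          rw [hA]; left
          constructor
          · intro i hi
            obtain ⟨j, rfl⟩ := Fin.exists_castSucc_eq.mpr hi
            have hj := hyD.2 j
            simp only [hb, if_neg hi]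
            constructor
            · exact div_nonneg hj.1 (le_of_lt h1t)
            · rw [div_le_iff₀ h1t]
              have : 2 * (1 - t) = 2 - y (Fin.last m) := by rw [ht]; ring
              linarith [hj.2]
          · simp only [hb, if_pos rfl]
            constructor <;> [linarith; linarith]
        have hseg : y ∈ segment ℝ b p :=
          ⟨1 - t, t, by linarith, le_of_lt ht0, by ring, by
            funext i
            simp only [Pi.add_apply, Pi.smul_apply, smul_eq_mul]
            by_cases hi : i = Fin.last m
            · subst hi
              simp only [hb, hp, if_pos rfl]
              rw [ht]; ring
            · simp only [hb, hp, if_neg hi]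
              field_simp
              ring⟩
        exact segment_subset_convexHull hbA hpA hseg
    rw [hDA, measure_diff_null (measure_singleton p), hD, coneVol]
    congr 1
    push_cast
    ring
end
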